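/- arXiv:1502.02393 — 2 statements merged into one kernel-verified Lean document; each statement's English description precedes it below -/
import Mathlib

section
/- For the braid arrangement A_2 in K^3 with hyperplanes ker(x_i - x_j), 1 ≤ i < j ≤ 3, and constant multiplicity m: if m is even, the module D(A_2, m) is free with exponents {0, 3m/2, 3m/2}; if m is odd, it is free with exponents {0, (3m-1)/2, (3m+1)/2}. -/
set_option maxHeartbeats 1000000

set_option linter.unusedSectionVars false

section SecA
open Polynomial UniqueFactorizationMonoid UniqueFactorizationDomain
variable {K : Type} [Field K]

private lemma Xp1_def : ((X:K[X]) + 1) = X + C 1 := by rw [map_one]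

private lemma prime_Xp1 : Prime ((X:K[X]) + 1) := by
  have h : ((X:K[X]) + 1) = X - C (-1) := by rw [map_neg, map_one, sub_neg_eq_add]
  rw [h]; exact prime_X_sub_C _

private lemma monic_Xp1 : ((X:K[X]) + 1).Monic := by rw [Xp1_def]; exact monic_X_add_C 1

private lemma Xp1_ne_zero : ((X:K[X]) + 1) ≠ 0 := monic_Xp1.ne_zero

private lemma nd_Xp1_pow (m : ℕ) : (((X:K[X]) + 1)^m).natDegree = m := by
  rw [monic_Xp1.natDegree_pow, Xp1_def, natDegree_X_add_C, mul_one]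

private lemma nd_Xpow_mul {m : ℕ} {A : K[X]} (hA : A ≠ 0) :
    ((X:K[X])^m * A).natDegree = m + A.natDegree := by
  rw [natDegree_mul (pow_ne_zero _ X_ne_zero) hA, natDegree_X_pow]

private lemma nd_Xp1pow_mul {m : ℕ} {A : K[X]} (hA : A ≠ 0) :
    (((X:K[X]) + 1)^m * A).natDegree = m + A.natDegree := by
  rw [natDegree_mul (pow_ne_zero _ Xp1_ne_zero) hA, nd_Xp1_pow]

private lemma not_X_dvd_Xp1 : ¬ (X:K[X]) ∣ (X + 1) := by
  intro h
  exact Polynomial.prime_X.not_dvd_one ((dvd_add_right (dvd_refl (X:K[X]))).mp h)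

private lemma not_X_dvd_Xp1_pow (m : ℕ) : ¬ (X:K[X]) ∣ (X + 1)^m := fun h =>
  not_X_dvd_Xp1 (Polynomial.prime_X.dvd_of_dvd_pow h)

private lemma not_Xp1_dvd_X : ¬ ((X:K[X]) + 1) ∣ X := by
  intro h
  have h1 : ((X:K[X])+1) ∣ (X+1) - X := dvd_sub (dvd_refl _) h
  simp only [add_sub_cancel_left] at h1
  exact prime_Xp1.not_dvd_one h1

private lemma not_Xp1_dvd_X_pow (m : ℕ) : ¬ ((X:K[X]) + 1) ∣ X^m := fun h =>
  not_Xp1_dvd_X (prime_Xp1.dvd_of_dvd_pow h)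

private lemma prime_natDegree_pos {p : K[X]} (hp : Prime p) : 1 ≤ p.natDegree := by
  by_contra h
  push_neg at h
  have hd : p.natDegree = 0 := by omega
  obtain ⟨a, ha⟩ := Polynomial.natDegree_eq_zero.mp hd
  have ha0 : a ≠ 0 := by
    rintro rfl; rw [map_zero] at ha; exact hp.ne_zero ha.symm
  exact hp.not_unit (ha ▸ (isUnit_C.mpr (isUnit_iff_ne_zero.mpr ha0)))

/-- Key one-variable lemma (via Mason–Stothers): a low-degree relation
`X^m1 * A + B + (X+1)^m3 * C = 0` forces `A = B = C = 0`. -/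
theorem lemA [CharZero K] : ∀ n : ℕ, ∀ m1 m3 : ℕ, ∀ A B C : K[X],
    A.natDegree + B.natDegree + C.natDegree ≤ n →
    X ^ m1 * A + B + (X + 1) ^ m3 * C = 0 →
    B.natDegree + C.natDegree + 2 ≤ m1 →
    A.natDegree + B.natDegree + 2 ≤ m3 →
    A = 0 ∧ B = 0 ∧ C = 0 := by
  intro n
  induction n using Nat.strong_induction_on with
  | _ n IH =>
  intro m1 m3 A B C hn heq h1 h3
  by_cases hA : A = 0
  · subst hA
    simp only [mul_zero, zero_add] at heq
    by_cases hC : C = 0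
    · subst hC; simp only [mul_zero, add_zero] at heq; exact ⟨rfl, heq, rfl⟩
    · exfalso
      have hB : B = -((X + 1) ^ m3 * C) := by linear_combination heq
      have : B.natDegree = m3 + C.natDegree := by rw [hB, natDegree_neg, nd_Xp1pow_mul hC]
      simp only [natDegree_zero] at h3; omega
  by_cases hC : C = 0
  · exfalso
    subst hC
    simp only [mul_zero, add_zero] at heq
    have hB : B = -((X:K[X]) ^ m1 * A) := by linear_combination heq
    have : B.natDegree = m1 + A.natDegree := by rw [hB, natDegree_neg, nd_Xpow_mul hA]
    omega
  by_cases hB : B = 0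
  · exfalso
    subst hB
    have hdvd : (X:K[X])^m1 ∣ (X+1)^m3 * C := ⟨-A, by linear_combination heq⟩
    have hXC : (X:K[X])^m1 ∣ C :=
      Polynomial.prime_X.pow_dvd_of_dvd_mul_left _ (not_X_dvd_Xp1_pow m3) hdvd
    have := Polynomial.natDegree_le_of_dvd hXC hC
    rw [natDegree_X_pow] at this
    simp only [natDegree_zero] at h1; omega
  -- all nonzero now; every further case ends in a contradiction
  exfalso
  classical
  have hm1 : 2 ≤ m1 := by omega
  have hm3 : 2 ≤ m3 := by omega
  by_cases hxBC : (X:K[X]) ∣ B ∨ (X:K[X]) ∣ C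
  · -- divide B and C by X, lower m1
    have hxf : (X:K[X]) ∣ X^m1 * A := (dvd_pow_self X (by omega : m1 ≠ 0)).mul_right A
    have hboth : (X:K[X]) ∣ B ∧ (X:K[X]) ∣ C := by
      rcases hxBC with h | h
      · refine ⟨h, ?_⟩
        have hxh : (X:K[X]) ∣ (X+1)^m3 * C := by
          have e : ((X:K[X])+1)^m3*C = -(X^m1*A) - B := by linear_combination heq
          rw [e]; exact dvd_sub (dvd_neg.mpr hxf) h
        exact (Polynomial.prime_X.dvd_mul.mp hxh).resolve_left (not_X_dvd_Xp1_pow m3)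
      · refine ⟨?_, h⟩
        have e : B = -((X:K[X])^m1*A) - (X+1)^m3*C := by linear_combination heq
        rw [e]; exact dvd_sub (dvd_neg.mpr hxf) (h.mul_left _)
    obtain ⟨⟨B', rfl⟩, ⟨C', rfl⟩⟩ := hboth
    have hB' : B' ≠ 0 := by rintro rfl; simp at hB
    have hC' : C' ≠ 0 := by rintro rfl; simp at hC
    obtain ⟨m1', rfl⟩ : ∃ k, m1 = k + 1 := ⟨m1 - 1, by omega⟩
    have h0 : (X:K[X]) * (X^m1' * A + B' + (X+1)^m3 * C') = 0 := by linear_combination heq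
    have heq' : (X:K[X])^m1' * A + B' + (X+1)^m3 * C' = 0 :=
      (mul_eq_zero.mp h0).resolve_left X_ne_zero
    have ndB : (X*B').natDegree = 1 + B'.natDegree := by
      rw [natDegree_mul X_ne_zero hB', natDegree_X]
    have ndC : (X*C').natDegree = 1 + C'.natDegree := by
      rw [natDegree_mul X_ne_zero hC', natDegree_X]
    have := IH (A.natDegree + B'.natDegree + C'.natDegree) (by omega) m1' m3 A B' C'
      (le_refl _) heq' (by omega) (by omega)
    exact hA this.1
  by_cases hx1AB : ((X:K[X])+1) ∣ A ∨ ((X:K[X])+1) ∣ B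
  · have hx1h : ((X:K[X])+1) ∣ (X+1)^m3 * C := (dvd_pow_self _ (by omega : m3 ≠ 0)).mul_right C
    have hboth : ((X:K[X])+1) ∣ A ∧ ((X:K[X])+1) ∣ B := by
      rcases hx1AB with h | h
      · refine ⟨h, ?_⟩
        have e : B = -((X:K[X])^m1*A) - (X+1)^m3*C := by linear_combination heq
        rw [e]; exact dvd_sub (dvd_neg.mpr ((h.mul_left _))) hx1h
      · refine ⟨?_, h⟩
        have e : (X:K[X])^m1*A = -B - (X+1)^m3*C := by linear_combination heq
        have hdvd : ((X:K[X])+1) ∣ X^m1*A := by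
          rw [e]; exact dvd_sub (dvd_neg.mpr h) hx1h
        exact (prime_Xp1.dvd_mul.mp hdvd).resolve_left (not_Xp1_dvd_X_pow m1)
    obtain ⟨⟨A', rfl⟩, ⟨B', rfl⟩⟩ := hboth
    have hA' : A' ≠ 0 := by rintro rfl; simp at hA
    have hB' : B' ≠ 0 := by rintro rfl; simp at hB
    obtain ⟨m3', rfl⟩ : ∃ k, m3 = k + 1 := ⟨m3 - 1, by omega⟩
    have h0 : ((X:K[X])+1) * (X^m1 * A' + B' + (X+1)^m3' * C) = 0 := by linear_combination heq
    have heq' : (X:K[X])^m1 * A' + B' + (X+1)^m3' * C = 0 :=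
      (mul_eq_zero.mp h0).resolve_left Xp1_ne_zero
    have ndA : (((X:K[X])+1)*A').natDegree = 1 + A'.natDegree := by
      rw [natDegree_mul Xp1_ne_zero hA', Xp1_def, natDegree_X_add_C]
    have ndB : (((X:K[X])+1)*B').natDegree = 1 + B'.natDegree := by
      rw [natDegree_mul Xp1_ne_zero hB', Xp1_def, natDegree_X_add_C]
    have := IH (A'.natDegree + B'.natDegree + C.natDegree) (by omega) m1 m3' A' B' C
      (le_refl _) heq' (by omega) (by omega)
    exact hA' this.1
  by_cases hcp : ∃ p : K[X], Prime p ∧ p ∣ A ∧ p ∣ B ∧ p ∣ C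
  · obtain ⟨p, hp, ⟨A', rfl⟩, ⟨B', rfl⟩, ⟨C', rfl⟩⟩ := hcp
    have hA' : A' ≠ 0 := by rintro rfl; simp at hA
    have hB' : B' ≠ 0 := by rintro rfl; simp at hB
    have hC' : C' ≠ 0 := by rintro rfl; simp at hC
    have h0 : p * (X^m1 * A' + B' + (X+1)^m3 * C') = 0 := by linear_combination heq
    have heq' : (X:K[X])^m1 * A' + B' + (X+1)^m3 * C' = 0 :=
      (mul_eq_zero.mp h0).resolve_left hp.ne_zero
    have hp1 := prime_natDegree_pos hp
    have ndA : (p*A').natDegree = p.natDegree + A'.natDegree := natDegree_mul hp.ne_zero hA'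
    have ndB : (p*B').natDegree = p.natDegree + B'.natDegree := natDegree_mul hp.ne_zero hB'
    have ndC : (p*C').natDegree = p.natDegree + C'.natDegree := natDegree_mul hp.ne_zero hC'
    have := IH (A'.natDegree + B'.natDegree + C'.natDegree) (by omega) m1 m3 A' B' C'
      (le_refl _) heq' (by omega) (by omega)
    exact hA' this.1
  by_cases hxA : (X:K[X]) ∣ A
  · obtain ⟨A', rfl⟩ := hxA
    have hA' : A' ≠ 0 := by rintro rfl; simp at hA
    have heq' : (X:K[X])^(m1+1) * A' + B + (X+1)^m3 * C = 0 := by linear_combination heq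
    have ndA : ((X:K[X])*A').natDegree = 1 + A'.natDegree := by
      rw [natDegree_mul X_ne_zero hA', natDegree_X]
    have := IH (A'.natDegree + B.natDegree + C.natDegree) (by omega) (m1+1) m3 A' B C
      (le_refl _) heq' (by omega) (by omega)
    exact hA' this.1
  by_cases hx1C : ((X:K[X])+1) ∣ C
  · obtain ⟨C', rfl⟩ := hx1C
    have hC' : C' ≠ 0 := by rintro rfl; simp at hC
    have heq' : (X:K[X])^m1 * A + B + (X+1)^(m3+1) * C' = 0 := by linear_combination heq
    have ndC : (((X:K[X])+1)*C').natDegree = 1 + C'.natDegree := by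
      rw [natDegree_mul Xp1_ne_zero hC', Xp1_def, natDegree_X_add_C]
    have := IH (A.natDegree + B.natDegree + C'.natDegree) (by omega) m1 (m3+1) A B C'
      (le_refl _) heq' (by omega) (by omega)
    exact hA this.1
  -- now apply Mason–Stothers
  push_neg at hxBC hx1AB hcp
  have hf0 : (X:K[X])^m1 * A ≠ 0 := mul_ne_zero (pow_ne_zero _ X_ne_zero) hA
  have hh0 : ((X:K[X])+1)^m3 * C ≠ 0 := mul_ne_zero (pow_ne_zero _ Xp1_ne_zero) hC
  have hfg : IsCoprime ((X:K[X])^m1 * A) B := by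
    refine isCoprime_of_prime_dvd (fun ⟨hf, _⟩ => hf0 hf) (fun z hz hzf hzg => ?_)
    rcases hz.dvd_mul.mp hzf with hzx | hzA
    · have hassoc := hz.irreducible.associated_of_dvd irreducible_X (hz.dvd_of_dvd_pow hzx)
      exact hxBC.1 (hassoc.symm.dvd.trans hzg)
    · have hzh : z ∣ ((X:K[X])+1)^m3 * C := by
        have e : ((X:K[X])+1)^m3*C = -(X^m1*A) - B := by linear_combination heq
        rw [e]; exact dvd_sub (dvd_neg.mpr hzf) hzg
      rcases hz.dvd_mul.mp hzh with hzx1 | hzC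
      · have hassoc := hz.irreducible.associated_of_dvd prime_Xp1.irreducible
          (hz.dvd_of_dvd_pow hzx1)
        exact hx1AB.1 (hassoc.symm.dvd.trans hzA)
      · exact hcp z hz hzA hzg hzC
  have hgh : IsCoprime B (((X:K[X])+1)^m3 * C) := by
    refine isCoprime_of_prime_dvd (fun ⟨_, hh⟩ => hh0 hh) (fun z hz hzg hzh => ?_)
    rcases hz.dvd_mul.mp hzh with hzx1 | hzC
    · have hassoc := hz.irreducible.associated_of_dvd prime_Xp1.irreducible
        (hz.dvd_of_dvd_pow hzx1)
      exact hx1AB.2 (hassoc.symm.dvd.trans hzg)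
    · have hzf : z ∣ (X:K[X])^m1 * A := by
        have e : (X:K[X])^m1*A = -B - (X+1)^m3*C := by linear_combination heq
        rw [e]; exact dvd_sub (dvd_neg.mpr hzg) hzh
      rcases hz.dvd_mul.mp hzf with hzx | hzA
      · have hassoc := hz.irreducible.associated_of_dvd irreducible_X (hz.dvd_of_dvd_pow hzx)
        exact hxBC.1 (hassoc.symm.dvd.trans hzg)
      · exact hcp z hz hzA hzg hzC
  have hhf : IsCoprime (((X:K[X])+1)^m3 * C) ((X:K[X])^m1 * A) := by
    refine isCoprime_of_prime_dvd (fun ⟨hh, _⟩ => hh0 hh) (fun z hz hzh hzf => ?_)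
    rcases hz.dvd_mul.mp hzh with hzx1 | hzC
    · have hassoc := hz.irreducible.associated_of_dvd prime_Xp1.irreducible
        (hz.dvd_of_dvd_pow hzx1)
      have hx1f : ((X:K[X])+1) ∣ X^m1 * A := hassoc.symm.dvd.trans hzf
      exact hx1AB.1 ((prime_Xp1.dvd_mul.mp hx1f).resolve_left (not_Xp1_dvd_X_pow m1))
    · rcases hz.dvd_mul.mp hzf with hzx | hzA
      · have hassoc := hz.irreducible.associated_of_dvd irreducible_X (hz.dvd_of_dvd_pow hzx)
        exact hxBC.2 (hassoc.symm.dvd.trans hzC)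
      · have hzg : z ∣ B := by
          have e : B = -((X:K[X])^m1*A) - (X+1)^m3*C := by linear_combination heq
          rw [e]; exact dvd_sub (dvd_neg.mpr hzf) hzh
        exact hcp z hz hzA hzg hzC
  rcases Polynomial.abc hf0 hB hh0 hfg heq with ⟨hdeg, -, -⟩ | ⟨hdf, -, -⟩
  · -- radical degree count
    have hrad : radical ((X:K[X])^m1 * A * B * (((X:K[X])+1)^m3 * C))
        = radical ((X:K[X])^m1) * radical A * radical B *
          (radical (((X:K[X])+1)^m3) * radical C) := by
      rw [radical_mul (hhf.symm.mul_left hgh).isRelPrime,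
          radical_mul hfg.isRelPrime,
          radical_mul ((Polynomial.prime_X.coprime_iff_not_dvd.mpr hxA).pow_left).isRelPrime,
          radical_mul ((prime_Xp1.coprime_iff_not_dvd.mpr hx1C).pow_left).isRelPrime]
    have hxr : (radical ((X:K[X])^m1)).natDegree ≤ 1 := by
      rw [radical_pow _ (by omega : m1 ≠ 0)]
      have := Polynomial.natDegree_le_of_dvd (radical_dvd_self (a := (X:K[X]))) X_ne_zero
      simpa using this
    have hx1r : (radical (((X:K[X])+1)^m3)).natDegree ≤ 1 := by
      rw [radical_pow _ (by omega : m3 ≠ 0)]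
      have := Polynomial.natDegree_le_of_dvd (radical_dvd_self (a := (X:K[X])+1)) Xp1_ne_zero
      rw [Xp1_def, natDegree_X_add_C] at this
      exact this
    have hAr : (radical A).natDegree ≤ A.natDegree :=
      Polynomial.natDegree_le_of_dvd (radical_dvd_self (a := A)) hA
    have hBr : (radical B).natDegree ≤ B.natDegree :=
      Polynomial.natDegree_le_of_dvd (radical_dvd_self (a := B)) hB
    have hCr : (radical C).natDegree ≤ C.natDegree :=
      Polynomial.natDegree_le_of_dvd (radical_dvd_self (a := C)) hC
    have hndtot : (radical ((X:K[X])^m1 * A * B * (((X:K[X])+1)^m3 * C))).natDegree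
        ≤ 1 + A.natDegree + B.natDegree + (1 + C.natDegree) := by
      rw [hrad]
      calc (radical ((X:K[X])^m1) * radical A * radical B *
          (radical (((X:K[X])+1)^m3) * radical C)).natDegree
          ≤ (radical ((X:K[X])^m1) * radical A * radical B).natDegree
            + (radical (((X:K[X])+1)^m3) * radical C).natDegree := natDegree_mul_le
        _ ≤ _ := by
            have e1 : ((radical ((X:K[X])^m1)) * radical A * radical B).natDegree
                ≤ 1 + A.natDegree + B.natDegree := by
              calc ((radical ((X:K[X])^m1)) * radical A * radical B).natDegree
                  ≤ ((radical ((X:K[X])^m1)) * radical A).natDegree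
                    + (radical B).natDegree := natDegree_mul_le
                _ ≤ ((radical ((X:K[X])^m1)).natDegree + (radical A).natDegree)
                    + (radical B).natDegree := by
                    exact Nat.add_le_add_right natDegree_mul_le _
                _ ≤ _ := by omega
            have e2 : ((radical (((X:K[X])+1)^m3)) * radical C).natDegree
                ≤ 1 + C.natDegree := by
              calc ((radical (((X:K[X])+1)^m3)) * radical C).natDegree
                  ≤ (radical (((X:K[X])+1)^m3)).natDegree
                    + (radical C).natDegree := natDegree_mul_le
                _ ≤ _ := by omega
            omega
    rw [nd_Xpow_mul hA] at hdeg
    omega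
  · have := natDegree_eq_zero_of_derivative_eq_zero hdf
    rw [nd_Xpow_mul hA] at this
    omega

end SecA
open Polynomial

section SecB
open Polynomial UniqueFactorizationMonoid UniqueFactorizationDomain
variable {K : Type} [Field K]

/-- The evaluation-of-coefficients linear map whose kernel consists of the solution
triples `(A,B,C)` of `X^m A + B + (X+1)^m C = 0` with degrees `≤ k`. -/
private noncomputable def solMap (K : Type) [Field K] (m k : ℕ) :
    (↥(degreeLT K (k+1)) × ↥(degreeLT K (k+1)) × ↥(degreeLT K (k+1)))
      →ₗ[K] (Fin (m+k+1) → K) where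
  toFun t := fun i =>
    ((X:K[X])^m * (t.1:K[X]) + ((t.2.1:K[X])) + (X+1)^m * (t.2.2:K[X])).coeff i
  map_add' t s := by
    funext i
    have e : (X:K[X])^m * ((t.1:K[X]) + (s.1:K[X])) + ((t.2.1:K[X]) + (s.2.1:K[X]))
        + (X+1)^m * ((t.2.2:K[X]) + (s.2.2:K[X]))
        = ((X:K[X])^m * (t.1:K[X]) + (t.2.1:K[X]) + (X+1)^m * (t.2.2:K[X]))
          + ((X:K[X])^m * (s.1:K[X]) + (s.2.1:K[X]) + (X+1)^m * (s.2.2:K[X])) := by ring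
    simp only [Prod.fst_add, Prod.snd_add, Submodule.coe_add, Pi.add_apply]
    rw [e, coeff_add]
  map_smul' c t := by
    funext i
    have e : (X:K[X])^m * (C c * (t.1:K[X])) + (C c * (t.2.1:K[X]))
        + (X+1)^m * (C c * (t.2.2:K[X]))
        = C c * ((X:K[X])^m * (t.1:K[X]) + (t.2.1:K[X]) + (X+1)^m * (t.2.2:K[X])) := by ring
    simp only [Prod.smul_fst, Prod.smul_snd, Submodule.coe_smul, smul_eq_C_mul,
      RingHom.id_apply, Pi.smul_apply, smul_eq_mul]
    rw [e, coeff_C_mul]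

private lemma mem_degreeLT_of_nd {p : K[X]} {k : ℕ} (h : p.natDegree ≤ k) :
    p ∈ degreeLT K (k+1) := by
  rw [Polynomial.mem_degreeLT]
  rcases eq_or_ne p 0 with rfl | hp
  · simp [degree_zero]
  · rw [degree_eq_natDegree hp]
    exact_mod_cast Nat.lt_succ_of_le h

private lemma nd_le_of_mem {p : K[X]} {k : ℕ} (h : p ∈ degreeLT K (k+1)) :
    p.natDegree ≤ k := by
  rw [Polynomial.mem_degreeLT] at h
  rcases eq_or_ne p 0 with rfl | hp
  · simp
  · rw [degree_eq_natDegree hp] at h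
    exact_mod_cast Nat.lt_succ_iff.mp (by exact_mod_cast h)

private lemma finrank_degreeLT (n : ℕ) : Module.finrank K ↥(degreeLT K n) = n := by
  rw [(Polynomial.degreeLTEquiv K n).finrank_eq, Module.finrank_fin_fun]

private instance degreeLT_finite (n : ℕ) : Module.Finite K ↥(degreeLT K n) :=
  Module.Finite.equiv (Polynomial.degreeLTEquiv K n).symm

/-- Members of the kernel of `solMap` give genuine polynomial solutions. -/
private lemma eq_zero_of_mem_ker {m k : ℕ}
    {t : ↥(degreeLT K (k+1)) × ↥(degreeLT K (k+1)) × ↥(degreeLT K (k+1))}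
    (ht : t ∈ LinearMap.ker (solMap K m k)) :
    (X:K[X])^m * (t.1:K[X]) + (t.2.1:K[X]) + (X+1)^m * (t.2.2:K[X]) = 0 := by
  have h0 : ∀ i : Fin (m+k+1),
      ((X:K[X])^m * (t.1:K[X]) + (t.2.1:K[X]) + (X+1)^m * (t.2.2:K[X])).coeff i = 0 := by
    intro i
    have := LinearMap.mem_ker.mp ht
    exact congrFun this i
  have hdeg : ((X:K[X])^m * (t.1:K[X]) + (t.2.1:K[X]) + (X+1)^m * (t.2.2:K[X])).natDegree
      ≤ m + k := by
    have h1 : ((X:K[X])^m * (t.1:K[X])).natDegree ≤ m + k := by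
      refine le_trans (natDegree_mul_le) ?_
      have := nd_le_of_mem t.1.2
      simp only [natDegree_X_pow]
      omega
    have h2 : ((t.2.1:K[X])).natDegree ≤ m + k := le_trans (nd_le_of_mem t.2.1.2) (by omega)
    have h3 : (((X:K[X])+1)^m * (t.2.2:K[X])).natDegree ≤ m + k := by
      refine le_trans (natDegree_mul_le) ?_
      have hx1 : ((X:K[X])+1).natDegree = 1 := by
        rw [show ((X:K[X])+1) = X + C 1 by rw [map_one], natDegree_X_add_C]
      have h4 : (((X:K[X])+1)^m).natDegree ≤ m := by
        have := natDegree_pow_le (p := (X:K[X])+1) (n := m)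
        rw [hx1, mul_one] at this
        exact this
      have := nd_le_of_mem t.2.2.2
      omega
    refine le_trans (natDegree_add_le _ _) (max_le (le_trans (natDegree_add_le _ _) (max_le h1 h2)) h3)
  ext i
  rcases lt_or_ge i (m+k+1) with hi | hi
  · simpa using h0 ⟨i, hi⟩
  · rw [coeff_eq_zero_of_natDegree_lt (lt_of_le_of_lt hdeg (by omega)), coeff_zero]

/-- Lower bound on the kernel dimension. -/
private lemma ker_big (m k : ℕ) :
    3*(k+1) ≤ Module.finrank K (LinearMap.ker (solMap K m k)) + (m+k+1) := by
  have hrn := LinearMap.finrank_range_add_finrank_ker (solMap K m k)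
  have hdom : Module.finrank K
      (↥(degreeLT K (k+1)) × ↥(degreeLT K (k+1)) × ↥(degreeLT K (k+1))) = 3*(k+1) := by
    rw [Module.finrank_prod, Module.finrank_prod, finrank_degreeLT]
    ring
  have hcod : Module.finrank K (LinearMap.range (solMap K m k)) ≤ m+k+1 := by
    have := Submodule.finrank_le (LinearMap.range (solMap K m k))
    rwa [Module.finrank_fin_fun] at this
  omega

end SecB

section SecC
open Polynomial UniqueFactorizationMonoid UniqueFactorizationDomain
variable {K : Type} [Field K] [CharZero K]

/-- Existence of the two basic solution triples with nonvanishing determinant scalar. -/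
theorem onevar_pair (m : ℕ) :
    ∃ (A1 B1 C1 A2 B2 C2 : K[X]) (e : K), e ≠ 0 ∧
      X ^ m * A1 + B1 + (X + 1) ^ m * C1 = 0 ∧
      X ^ m * A2 + B2 + (X + 1) ^ m * C2 = 0 ∧
      A1.natDegree ≤ m / 2 ∧ B1.natDegree ≤ m / 2 ∧ C1.natDegree ≤ m / 2 ∧
      A2.natDegree ≤ m - m / 2 ∧ B2.natDegree ≤ m - m / 2 ∧ C2.natDegree ≤ m - m / 2 ∧
      A1 * B2 - A2 * B1 = C e * (X + 1) ^ m := by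
  rcases eq_or_ne m 0 with rfl | hm0
  · refine ⟨1, -1, 0, 0, -1, 1, -1, by norm_num, by ring, by ring, ?_⟩
    simp
  set k1 := m / 2 with hk1def
  set k2 := m - m / 2 with hk2def
  have hk12 : k1 + k2 = m := by omega
  have hk1m : m ≤ 2 * k1 + 1 := by omega
  have hk1k2 : k1 ≤ k2 ∧ k2 ≤ k1 + 1 := by omega
  have hm1 : 1 ≤ m := by omega
  -- step 1 : find P1
  have hker1 : LinearMap.ker (solMap K m k1) ≠ ⊥ := by
    intro hbot
    have := ker_big (K := K) m k1
    rw [hbot, finrank_bot] at this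
    omega
  obtain ⟨z1, hz1mem, hz1ne⟩ := Submodule.ne_bot_iff _ |>.mp hker1
  set A1 := (z1.1 : K[X]) with hA1def
  set B1 := (z1.2.1 : K[X]) with hB1def
  set C1 := (z1.2.2 : K[X]) with hC1def
  have eq1 : X ^ m * A1 + B1 + (X + 1) ^ m * C1 = 0 := eq_zero_of_mem_ker hz1mem
  have hdA1 : A1.natDegree ≤ k1 := nd_le_of_mem z1.1.2
  have hdB1 : B1.natDegree ≤ k1 := nd_le_of_mem z1.2.1.2
  have hdC1 : C1.natDegree ≤ k1 := nd_le_of_mem z1.2.2.2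
  have hz1netriple : ¬(A1 = 0 ∧ B1 = 0 ∧ C1 = 0) := by
    rintro ⟨h1, h2, h3⟩
    apply hz1ne
    have e1 : z1.1 = 0 := Subtype.ext h1
    have e2 : z1.2.1 = 0 := Subtype.ext h2
    have e3 : z1.2.2 = 0 := Subtype.ext h3
    exact Prod.ext e1 (Prod.ext e2 e3)
  -- A1 and C1 are nonzero
  have hA1ne : A1 ≠ 0 := by
    intro hA1z
    rw [hA1z] at eq1
    simp only [mul_zero, zero_add] at eq1
    by_cases hC1z : C1 = 0
    · rw [hC1z] at eq1
      simp only [mul_zero, add_zero] at eq1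
      exact hz1netriple ⟨hA1z, eq1, hC1z⟩
    · have hB1e : B1 = -((X + 1) ^ m * C1) := by linear_combination eq1
      have : B1.natDegree = m + C1.natDegree := by rw [hB1e, natDegree_neg, nd_Xp1pow_mul hC1z]
      omega
  have hC1ne : C1 ≠ 0 := by
    intro hC1z
    rw [hC1z] at eq1
    simp only [mul_zero, add_zero] at eq1
    by_cases hA1z : A1 = 0
    · rw [hA1z] at eq1
      simp only [mul_zero, zero_add] at eq1
      exact hz1netriple ⟨hA1z, eq1, hC1z⟩
    · have hB1e : B1 = -((X:K[X]) ^ m * A1) := by linear_combination eq1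
      have : B1.natDegree = m + A1.natDegree := by rw [hB1e, natDegree_neg, nd_Xpow_mul hA1z]
      omega
  -- some component has degree exactly k1
  have hD : ∃ D : K[X], D ≠ 0 ∧ D.natDegree = k1 ∧ (D = A1 ∨ D = B1 ∨ D = C1) := by
    rcases eq_or_ne k1 0 with hk10 | hk10
    · exact ⟨A1, hA1ne, by omega, Or.inl rfl⟩
    · by_contra hno
      push_neg at hno
      have hdd : A1.natDegree ≤ k1 - 1 ∧ B1.natDegree ≤ k1 - 1 ∧ C1.natDegree ≤ k1 - 1 := by
        refine ⟨?_, ?_, ?_⟩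
        · rcases lt_or_eq_of_le hdA1 with h | h
          · omega
          · exact absurd rfl ((hno A1 hA1ne h).1)
        · rcases lt_or_eq_of_le hdB1 with h | h
          · omega
          · by_cases hB1z : B1 = 0
            · rw [hB1z]; simp
            · exact absurd rfl ((hno B1 hB1z h).2.1)
        · rcases lt_or_eq_of_le hdC1 with h | h
          · omega
          · exact absurd rfl ((hno C1 hC1ne h).2.2)
      have := lemA (A1.natDegree + B1.natDegree + C1.natDegree) m m A1 B1 C1
        (le_refl _) eq1 (by omega) (by omega)
      exact hA1ne this.1
  obtain ⟨D, hDne, hDdeg, hDcase⟩ := hD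
  -- step 2 : find P2 outside the multiples of P1
  have hμmem : ∀ (l : K[X]), l.natDegree ≤ k2 - k1 → ∀ E : K[X], E.natDegree ≤ k1 →
      (l * E).natDegree ≤ k2 := by
    intro l hl E hE
    refine le_trans natDegree_mul_le (by omega)
  set μ : ↥(degreeLT K (k2-k1+1)) →ₗ[K]
      (↥(degreeLT K (k2+1)) × ↥(degreeLT K (k2+1)) × ↥(degreeLT K (k2+1))) :=
    { toFun := fun l =>
        (⟨(l:K[X]) * A1, mem_degreeLT_of_nd (hμmem _ (nd_le_of_mem l.2) _ hdA1)⟩,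
         ⟨(l:K[X]) * B1, mem_degreeLT_of_nd (hμmem _ (nd_le_of_mem l.2) _ hdB1)⟩,
         ⟨(l:K[X]) * C1, mem_degreeLT_of_nd (hμmem _ (nd_le_of_mem l.2) _ hdC1)⟩)
      map_add' := by
        intro l l'
        refine Prod.ext (Subtype.ext ?_) (Prod.ext (Subtype.ext ?_) (Subtype.ext ?_)) <;>
          simp [add_mul]
      map_smul' := by
        intro c l
        refine Prod.ext (Subtype.ext ?_) (Prod.ext (Subtype.ext ?_) (Subtype.ext ?_)) <;>
          simp [smul_mul_assoc] } with hμdef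
  have hnotle : ¬ (LinearMap.ker (solMap K m k2) ≤ LinearMap.range μ) := by
    intro hle
    have h1 : Module.finrank K (LinearMap.ker (solMap K m k2))
        ≤ Module.finrank K (LinearMap.range μ) := Submodule.finrank_mono hle
    have h2 : Module.finrank K (LinearMap.range μ) ≤ k2 - k1 + 1 := by
      have := LinearMap.finrank_range_le μ
      rwa [finrank_degreeLT] at this
    have := ker_big (K := K) m k2
    omega
  obtain ⟨z2, hz2mem, hz2nr⟩ := SetLike.not_le_iff_exists.mp hnotle
  set A2 := (z2.1 : K[X]) with hA2def
  set B2 := (z2.2.1 : K[X]) with hB2def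
  set C2 := (z2.2.2 : K[X]) with hC2def
  have eq2 : X ^ m * A2 + B2 + (X + 1) ^ m * C2 = 0 := eq_zero_of_mem_ker hz2mem
  have hdA2 : A2.natDegree ≤ k2 := nd_le_of_mem z2.1.2
  have hdB2 : B2.natDegree ≤ k2 := nd_le_of_mem z2.2.1.2
  have hdC2 : C2.natDegree ≤ k2 := nd_le_of_mem z2.2.2.2
  -- determinant minor is nonzero
  have hδ : A1 * C2 - A2 * C1 ≠ 0 := by
    intro hδz
    by_cases hcop : IsCoprime A1 C1
    · -- P2 is a multiple of P1, contradiction with z2 ∉ range μ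
      have hd1 : A1 ∣ A2 * C1 := ⟨C2, by linear_combination -hδz⟩
      obtain ⟨l0, hl0⟩ : A1 ∣ A2 := hcop.dvd_of_dvd_mul_right hd1
      have hC2e : C2 = l0 * C1 := by
        have h1 : A1 * C2 = A1 * (l0 * C1) := by
          rw [← mul_assoc, ← hl0]; linear_combination hδz
        exact mul_left_cancel₀ hA1ne h1
      have hB2e : B2 = l0 * B1 := by
        have heq2' := eq2
        rw [hl0, hC2e] at heq2'
        linear_combination heq2' - l0 * eq1
      rcases eq_or_ne l0 0 with rfl | hl0ne
      · apply hz2nr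
        have : z2 = 0 := by
          have e1 : z2.1 = 0 := Subtype.ext (by rw [← hA2def, hl0, mul_zero]; simp)
          have e2 : z2.2.1 = 0 := Subtype.ext (by rw [← hB2def, hB2e, zero_mul]; simp)
          have e3 : z2.2.2 = 0 := Subtype.ext (by rw [← hC2def, hC2e, zero_mul]; simp)
          exact Prod.ext e1 (Prod.ext e2 e3)
        rw [this]
        exact Submodule.zero_mem _
      · have hl0deg : l0.natDegree ≤ k2 - k1 := by
          have hld : (l0 * D).natDegree = l0.natDegree + k1 := by
            rw [natDegree_mul hl0ne hDne, hDdeg]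
          rcases hDcase with rfl | rfl | rfl
          · rw [mul_comm] at hld
            rw [← hl0] at hld
            omega
          · rw [← hB2e] at hld
            omega
          · rw [← hC2e] at hld
            omega
        apply hz2nr
        refine ⟨⟨l0, mem_degreeLT_of_nd hl0deg⟩, ?_⟩
        refine Prod.ext (Subtype.ext ?_) (Prod.ext (Subtype.ext ?_) (Subtype.ext ?_))
        · show l0 * A1 = A2
          rw [hl0, mul_comm]
        · show l0 * B1 = B2
          rw [hB2e]
        · show l0 * C1 = C2
          rw [hC2e]
    · -- common prime, contradiction with lemA
      have hex : ∃ p : K[X], Prime p ∧ p ∣ A1 ∧ p ∣ C1 := by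
        by_contra hno
        push_neg at hno
        exact hcop (isCoprime_of_prime_dvd (fun ⟨h, _⟩ => hA1ne h)
          (fun z hz hzA hzC => hno z hz hzA hzC))
      obtain ⟨p, hp, ⟨A1', hA1'⟩, ⟨C1', hC1'⟩⟩ := hex
      have hpB : p ∣ B1 := by
        have e : B1 = -((X:K[X])^m * A1) - (X+1)^m * C1 := by
          linear_combination eq1
        rw [e, hA1', hC1']
        exact dvd_sub (dvd_neg.mpr ((dvd_mul_right p A1').mul_left _))
          ((dvd_mul_right p C1').mul_left _)
      obtain ⟨B1', hB1'⟩ := hpB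
      have h0 : p * ((X:K[X])^m * A1' + B1' + (X+1)^m * C1') = 0 := by
        rw [hA1', hB1', hC1'] at eq1
        linear_combination eq1
      have heqin : (X:K[X])^m * A1' + B1' + (X+1)^m * C1' = 0 :=
        (mul_eq_zero.mp h0).resolve_left hp.ne_zero
      have hA1'ne : A1' ≠ 0 := by
        rintro rfl; rw [mul_zero] at hA1'; exact hA1ne hA1'
      have hC1'ne : C1' ≠ 0 := by
        rintro rfl; rw [mul_zero] at hC1'; exact hC1ne hC1'
      have hdp : 1 ≤ p.natDegree := prime_natDegree_pos hp
      have hndA : A1.natDegree = p.natDegree + A1'.natDegree := by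
        rw [hA1']; exact natDegree_mul hp.ne_zero hA1'ne
      have hndC : C1.natDegree = p.natDegree + C1'.natDegree := by
        rw [hC1']; exact natDegree_mul hp.ne_zero hC1'ne
      have hndB : B1'.natDegree ≤ k1 - 1 := by
        rcases eq_or_ne B1' 0 with rfl | hB1'ne
        · simp
        · have : B1.natDegree = p.natDegree + B1'.natDegree := by
            rw [hB1']; exact natDegree_mul hp.ne_zero hB1'ne
          omega
      have := lemA (A1'.natDegree + B1'.natDegree + C1'.natDegree) m m A1' B1' C1'
        (le_refl _) heqin (by omega) (by omega)
      exact hA1'ne this.1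
  -- conclude : the determinant is a nonzero scalar multiple of (X+1)^m
  have hδeq : A1 * B2 - A2 * B1 = -((X+1)^m) * (A1 * C2 - A2 * C1) := by
    linear_combination A1 * eq2 - A2 * eq1
  have hd1 : (A1 * B2 - A2 * B1).natDegree ≤ m := by
    refine le_trans (natDegree_sub_le _ _) (max_le ?_ ?_) <;>
      refine le_trans natDegree_mul_le (by omega)
  have hd2 : (A1 * B2 - A2 * B1).natDegree = m + (A1 * C2 - A2 * C1).natDegree := by
    rw [hδeq, neg_mul, natDegree_neg, nd_Xp1pow_mul hδ]
  have hδdeg : (A1 * C2 - A2 * C1).natDegree = 0 := by omega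
  obtain ⟨e0, he0⟩ := Polynomial.natDegree_eq_zero.mp hδdeg
  have he0ne : e0 ≠ 0 := by rintro rfl; rw [map_zero] at he0; exact hδ he0.symm
  refine ⟨A1, B1, C1, A2, B2, C2, -e0, neg_ne_zero.mpr he0ne, eq1, eq2,
    hdA1, hdB1, hdC1, hdA2, hdB2, hdC2, ?_⟩
  rw [map_neg, hδeq, he0]
  ring

end SecC

section SecD
open Polynomial UniqueFactorizationMonoid UniqueFactorizationDomain
variable {K : Type} [Field K]

/-- The three linear forms of the braid arrangement `A₂`. -/
private noncomputable def uS (K : Type) [Field K] : MvPolynomial (Fin 3) K :=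
  MvPolynomial.X 0 - MvPolynomial.X 1
private noncomputable def vS (K : Type) [Field K] : MvPolynomial (Fin 3) K :=
  MvPolynomial.X 1 - MvPolynomial.X 2
private noncomputable def wS (K : Type) [Field K] : MvPolynomial (Fin 3) K :=
  MvPolynomial.X 0 - MvPolynomial.X 2

private lemma uvw (K : Type) [Field K] : uS K + vS K = wS K := by
  simp only [uS, vS, wS]; ring

/-- Homogenization of a one-variable polynomial (of degree at most `k`) to a homogeneous
polynomial of degree `k` in `u = x₀ - x₁` and `v = x₁ - x₂`. -/
private noncomputable def homo (K : Type) [Field K] (k : ℕ) (P : K[X]) :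
    MvPolynomial (Fin 3) K :=
  ∑ j ∈ Finset.range (k+1), MvPolynomial.C (P.coeff j) * (uS K)^j * (vS K)^(k-j)

private lemma uS_hom : (uS K).IsHomogeneous 1 :=
  (MvPolynomial.isHomogeneous_X _ _).sub (MvPolynomial.isHomogeneous_X _ _)
private lemma vS_hom : (vS K).IsHomogeneous 1 :=
  (MvPolynomial.isHomogeneous_X _ _).sub (MvPolynomial.isHomogeneous_X _ _)
private lemma wS_hom : (wS K).IsHomogeneous 1 :=
  (MvPolynomial.isHomogeneous_X _ _).sub (MvPolynomial.isHomogeneous_X _ _)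

private lemma homo_hom (k : ℕ) (P : K[X]) : (homo K k P).IsHomogeneous k := by
  refine MvPolynomial.IsHomogeneous.sum _ _ _ (fun j hj => ?_)
  have hj' : j ≤ k := by
    have := Finset.mem_range.mp hj; omega
  have h1 : (MvPolynomial.C (P.coeff j) * (uS K)^j * (vS K)^(k-j)).IsHomogeneous
      (0 + 1*j + 1*(k-j)) :=
    ((MvPolynomial.isHomogeneous_C _ _).mul (uS_hom.pow j)).mul (vS_hom.pow (k-j))
  have he : 0 + 1*j + 1*(k-j) = k := by omega
  rwa [he] at h1

private lemma homo_add (k : ℕ) (P Q : K[X]) :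
    homo K k (P + Q) = homo K k P + homo K k Q := by
  rw [homo, homo, homo, ← Finset.sum_add_distrib]
  refine Finset.sum_congr rfl (fun j _ => ?_)
  rw [Polynomial.coeff_add, map_add]
  ring

private lemma homo_Cmul (k : ℕ) (c : K) (P : K[X]) :
    homo K k (Polynomial.C c * P) = MvPolynomial.C c * homo K k P := by
  rw [homo, homo, Finset.mul_sum]
  refine Finset.sum_congr rfl (fun j _ => ?_)
  rw [Polynomial.coeff_C_mul, map_mul]
  ring

private lemma homo_zero (k : ℕ) : homo K k 0 = 0 := by
  simp [homo]

private lemma homo_neg (k : ℕ) (P : K[X]) : homo K k (-P) = - homo K k P := by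
  have h := homo_Cmul (K := K) k (-1) P
  simpa using h

private lemma homo_sub (k : ℕ) (P Q : K[X]) :
    homo K k (P - Q) = homo K k P - homo K k Q := by
  rw [sub_eq_add_neg, homo_add, homo_neg, sub_eq_add_neg]

private lemma homo_Xmul (k : ℕ) (P : K[X]) :
    homo K (k+1) (Polynomial.X * P) = uS K * homo K k P := by
  rw [homo, homo, Finset.sum_range_succ', Finset.mul_sum]
  have h0 : (Polynomial.X * P).coeff 0 = 0 := by
    rw [Polynomial.mul_coeff_zero, Polynomial.coeff_X_zero, zero_mul]
  rw [h0, map_zero, zero_mul, zero_mul, add_zero]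
  refine Finset.sum_congr rfl (fun j hj => ?_)
  have hj' : j ≤ k := by have := Finset.mem_range.mp hj; omega
  rw [Polynomial.coeff_X_mul]
  have he : k + 1 - (j+1) = k - j := by omega
  rw [he]
  ring

private lemma homo_pad (k : ℕ) (P : K[X]) (hP : P.natDegree ≤ k) :
    homo K (k+1) P = vS K * homo K k P := by
  rw [homo, homo, Finset.sum_range_succ, Finset.mul_sum]
  rw [Polynomial.coeff_eq_zero_of_natDegree_lt (by omega : P.natDegree < k+1),
    map_zero, zero_mul, zero_mul, add_zero]
  refine Finset.sum_congr rfl (fun j hj => ?_)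
  have hj' : j ≤ k := by have := Finset.mem_range.mp hj; omega
  have he : k + 1 - j = (k - j) + 1 := by omega
  rw [he, pow_succ]
  ring

private lemma homo_pad' (k t : ℕ) (P : K[X]) (hP : P.natDegree ≤ k) :
    homo K (k+t) P = (vS K)^t * homo K k P := by
  induction t with
  | zero => simp
  | succ t ih =>
      have : k + (t+1) = (k+t) + 1 := by omega
      rw [this, homo_pad (k+t) P (by omega), ih, pow_succ]
      ring

private lemma homo_C (c : K) : homo K 0 (Polynomial.C c) = MvPolynomial.C c := by
  simp [homo]

private lemma homo_one : homo K 0 1 = 1 := by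
  simpa using homo_C (K := K) 1

private lemma homo_mul : ∀ (d1 : ℕ) (P : K[X]), P.natDegree ≤ d1 →
    ∀ (d2 : ℕ) (Q : K[X]), Q.natDegree ≤ d2 →
    homo K (d1+d2) (P * Q) = homo K d1 P * homo K d2 Q := by
  intro d1
  induction d1 with
  | zero =>
      intro P hP d2 Q hQ
      have hPC : P = Polynomial.C (P.coeff 0) := Polynomial.eq_C_of_natDegree_le_zero hP
      rw [hPC, homo_Cmul, homo_C, zero_add]
  | succ d1 ih =>
      intro P hP d2 Q hQ
      have hsplit : P = Polynomial.X * P.divX + Polynomial.C (P.coeff 0) :=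
        (Polynomial.X_mul_divX_add P).symm
      have hdiv : P.divX.natDegree ≤ d1 := by
        rw [Polynomial.natDegree_divX_eq_natDegree_tsub_one]
        omega
      have hPQd : (P.divX * Q).natDegree ≤ d1 + d2 :=
        le_trans Polynomial.natDegree_mul_le (by omega)
      have hidx : d1 + 1 + d2 = (d1 + d2) + 1 := by omega
      have key : homo K ((d1+d2)+1) (P * Q)
          = homo K ((d1+d2)+1) (Polynomial.X * (P.divX * Q))
            + homo K ((d1+d2)+1) (Polynomial.C (P.coeff 0) * Q) := by
        rw [← homo_add]
        congr 1
        conv_lhs => rw [hsplit]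
        ring
      have h1 : homo K ((d1+d2)+1) (Polynomial.X * (P.divX * Q))
          = uS K * (homo K d1 P.divX * homo K d2 Q) := by
        rw [homo_Xmul, ih _ hdiv d2 Q hQ]
      have h2 : homo K ((d1+d2)+1) (Polynomial.C (P.coeff 0) * Q)
          = MvPolynomial.C (P.coeff 0) * ((vS K)^(d1+1) * homo K d2 Q) := by
        rw [homo_Cmul]
        congr 1
        have hp := homo_pad' (K := K) d2 (d1+1) Q hQ
        rw [show (d1+d2)+1 = d2 + (d1+1) from by omega, hp]
      have hCc : homo K (d1+1) (Polynomial.C (P.coeff 0))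
          = (vS K)^(d1+1) * MvPolynomial.C (P.coeff 0) := by
        have hp := homo_pad' (K := K) 0 (d1+1) (Polynomial.C (P.coeff 0)) (by simp)
        rw [zero_add] at hp
        rw [hp, homo_C]
      have hP1 : homo K (d1+1) P
          = uS K * homo K d1 P.divX + MvPolynomial.C (P.coeff 0) * (vS K)^(d1+1) := by
        conv_lhs => rw [hsplit]
        rw [homo_add, homo_Xmul, hCc]
        ring
      rw [hidx, key, h1, h2, hP1]
      ring

private lemma homo_Xpow (m : ℕ) : homo K m ((Polynomial.X : K[X])^m) = (uS K)^m := by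
  induction m with
  | zero => simpa using homo_one
  | succ m ih =>
      have : (Polynomial.X : K[X])^(m+1) = Polynomial.X * Polynomial.X^m := by ring
      rw [show m + 1 = m + 1 from rfl, this, homo_Xmul, ih]
      ring

private lemma homo_Xp1 : homo K 1 ((Polynomial.X : K[X]) + 1) = uS K + vS K := by
  rw [homo]
  simp [Finset.sum_range_succ, Polynomial.coeff_one]
  ring

private lemma homo_Xp1pow (m : ℕ) : homo K m (((Polynomial.X : K[X]) + 1)^m) = (wS K)^m := by
  induction m with
  | zero => simpa using homo_one
  | succ m ih =>
      have hd1 : ((Polynomial.X : K[X]) + 1).natDegree ≤ 1 := by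
        rw [show ((Polynomial.X:K[X])+1) = Polynomial.X + Polynomial.C 1 by rw [map_one],
          Polynomial.natDegree_X_add_C]
      have hd2 : (((Polynomial.X : K[X]) + 1)^m).natDegree ≤ m := (nd_Xp1_pow m).le
      rw [show m + 1 = 1 + m from by omega]
      have he : ((Polynomial.X : K[X]) + 1)^(1+m) = ((Polynomial.X : K[X]) + 1)
          * ((Polynomial.X : K[X]) + 1)^m := by ring
      rw [he, homo_mul 1 _ hd1 m _ hd2, homo_Xp1, ih, uvw]
      ring

/-- Transfer of a one-variable solution to the braid setting. -/
private lemma transfer (m k : ℕ) (A B C : K[X]) (hA : A.natDegree ≤ k) (hB : B.natDegree ≤ k)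
    (hC : C.natDegree ≤ k)
    (heq : Polynomial.X ^ m * A + B + (Polynomial.X + 1) ^ m * C = 0) :
    (uS K)^m * homo K k A + (vS K)^m * homo K k B + (wS K)^m * homo K k C = 0 := by
  have h1 : homo K (m+k) (Polynomial.X^m * A) = (uS K)^m * homo K k A := by
    rw [homo_mul m _ (Polynomial.natDegree_X_pow m).le k A hA, homo_Xpow]
  have h2 : homo K (m+k) B = (vS K)^m * homo K k B := by
    have := homo_pad' (K := K) k m B hB
    rw [show m + k = k + m from by omega, this]
  have h3 : homo K (m+k) ((Polynomial.X + 1)^m * C) = (wS K)^m * homo K k C := by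
    rw [homo_mul m _ (nd_Xp1_pow m).le k C hC, homo_Xp1pow]
  have h0 := homo_zero (K := K) (m+k)
  rw [← heq, homo_add, homo_add, h1, h2, h3] at h0
  rw [← h0]

end SecD


section SecE
variable {K : Type} [Field K]

private lemma prime_equiv {A B : Type} [CommRing A] [CommRing B] (e : A ≃+* B) {a : A}
    (h : Prime a) : Prime (e a) := (MulEquiv.prime_iff e.toMulEquiv).mpr h

private lemma prime_X0 : Prime (MvPolynomial.X 0 : MvPolynomial (Fin 3) K) := by
  have h : Prime ((MvPolynomial.finSuccEquiv K 2).toRingEquiv (MvPolynomial.X 0)) := by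
    have he : (MvPolynomial.finSuccEquiv K 2).toRingEquiv (MvPolynomial.X 0)
        = Polynomial.X := MvPolynomial.finSuccEquiv_X_zero
    rw [he]; exact Polynomial.prime_X
  exact (MulEquiv.prime_iff (MvPolynomial.finSuccEquiv K 2).toRingEquiv.toMulEquiv).mp h

private lemma prime_Xi (i : Fin 3) : Prime (MvPolynomial.X i : MvPolynomial (Fin 3) K) := by
  have h := prime_equiv (MvPolynomial.renameEquiv K (Equiv.swap (0 : Fin 3) i)).toRingEquiv
    (prime_X0 (K := K))
  have he : (MvPolynomial.renameEquiv K (Equiv.swap (0 : Fin 3) i)).toRingEquiv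
      (MvPolynomial.X 0) = MvPolynomial.X i := by
    show (MvPolynomial.renameEquiv K (Equiv.swap (0 : Fin 3) i)) (MvPolynomial.X 0)
      = MvPolynomial.X i
    rw [MvPolynomial.renameEquiv_apply, MvPolynomial.rename_X, Equiv.swap_apply_left]
  rwa [he] at h

private lemma prime_lin {i j : Fin 3} (hij : i ≠ j) :
    Prime (MvPolynomial.X i - MvPolynomial.X j : MvPolynomial (Fin 3) K) := by
  set f : MvPolynomial (Fin 3) K →ₐ[K] MvPolynomial (Fin 3) K :=
    MvPolynomial.aeval (fun t =>
      if t = i then MvPolynomial.X i - MvPolynomial.X j else MvPolynomial.X t) with hf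
  set g : MvPolynomial (Fin 3) K →ₐ[K] MvPolynomial (Fin 3) K :=
    MvPolynomial.aeval (fun t =>
      if t = i then MvPolynomial.X i + MvPolynomial.X j else MvPolynomial.X t) with hg
  have hXj : f (MvPolynomial.X j) = MvPolynomial.X j := by
    rw [hf, MvPolynomial.aeval_X, if_neg (Ne.symm hij)]
  have hXjg : g (MvPolynomial.X j) = MvPolynomial.X j := by
    rw [hg, MvPolynomial.aeval_X, if_neg (Ne.symm hij)]
  have hfg : f.comp g = AlgHom.id K _ := by
    apply MvPolynomial.algHom_ext
    intro t
    by_cases ht : t = i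
    · subst ht
      simp only [AlgHom.comp_apply, AlgHom.id_apply, hg, MvPolynomial.aeval_X]
      rw [if_true, map_add, hXj, hf, MvPolynomial.aeval_X, if_pos rfl]
      ring
    · simp only [AlgHom.comp_apply, AlgHom.id_apply, hg, MvPolynomial.aeval_X, if_neg ht]
      rw [hf, MvPolynomial.aeval_X, if_neg ht]
  have hgf : g.comp f = AlgHom.id K _ := by
    apply MvPolynomial.algHom_ext
    intro t
    by_cases ht : t = i
    · subst ht
      simp only [AlgHom.comp_apply, AlgHom.id_apply, hf, MvPolynomial.aeval_X]
      rw [if_true, map_sub, hXjg, hg, MvPolynomial.aeval_X, if_pos rfl]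
      ring
    · simp only [AlgHom.comp_apply, AlgHom.id_apply, hf, MvPolynomial.aeval_X, if_neg ht]
      rw [hg, MvPolynomial.aeval_X, if_neg ht]
  set E := AlgEquiv.ofAlgHom f g hfg hgf with hE
  have h := prime_equiv E.toRingEquiv (prime_Xi (K := K) i)
  have he : E.toRingEquiv (MvPolynomial.X i) = MvPolynomial.X i - MvPolynomial.X j := by
    show E (MvPolynomial.X i) = _
    rw [hE]
    show f (MvPolynomial.X i) = _
    rw [hf, MvPolynomial.aeval_X, if_pos rfl]
  rwa [he] at h

private lemma prime_uS : Prime (uS K) := prime_lin (by decide)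
private lemma prime_vS : Prime (vS K) := prime_lin (by decide)
private lemma prime_wS : Prime (wS K) := prime_lin (by decide)

private lemma not_dvd_of_eval {p q : MvPolynomial (Fin 3) K} (pt : Fin 3 → K)
    (hp : MvPolynomial.eval pt p = 0) (hq : MvPolynomial.eval pt q ≠ 0) : ¬ p ∣ q := by
  rintro ⟨r, rfl⟩
  rw [map_mul, hp, zero_mul] at hq
  exact hq rfl

private lemma not_v_dvd_u : ¬ (vS K) ∣ (uS K) := by
  refine not_dvd_of_eval ![1, 0, 0] ?_ ?_ <;>
    simp [uS, vS]

private lemma not_w_dvd_u : ¬ (wS K) ∣ (uS K) := by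
  refine not_dvd_of_eval ![1, 0, 1] ?_ ?_ <;>
    simp [uS, wS]

private lemma not_w_dvd_v : ¬ (wS K) ∣ (vS K) := by
  refine not_dvd_of_eval ![1, 0, 1] ?_ ?_ <;>
    simp [vS, wS]

private lemma triple_dvd (m : ℕ) {t : MvPolynomial (Fin 3) K}
    (hu : (uS K)^m ∣ t) (hv : (vS K)^m ∣ t) (hw : (wS K)^m ∣ t) :
    (uS K)^m * (vS K)^m * (wS K)^m ∣ t := by
  obtain ⟨s, rfl⟩ := hu
  have hvu : ¬ (vS K) ∣ (uS K)^m := fun h => not_v_dvd_u (prime_vS.dvd_of_dvd_pow h)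
  have hv' : (vS K)^m ∣ s := prime_vS.pow_dvd_of_dvd_mul_left m hvu hv
  obtain ⟨r, hr⟩ := hv'
  have hw2 : (wS K)^m ∣ ((uS K)^m * (vS K)^m) * r := by
    rw [mul_assoc, ← hr]; exact hw
  have hwuv : ¬ (wS K) ∣ (uS K)^m * (vS K)^m := by
    intro h
    rcases prime_wS.dvd_mul.mp h with h' | h'
    · exact not_w_dvd_u (prime_wS.dvd_of_dvd_pow h')
    · exact not_w_dvd_v (prime_wS.dvd_of_dvd_pow h')
  have hw' : (wS K)^m ∣ r := prime_wS.pow_dvd_of_dvd_mul_left m hwuv hw2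
  obtain ⟨q, rfl⟩ := hw'
  exact ⟨q, by rw [hr]; ring⟩

private lemma uS_ne : (uS K) ≠ 0 := prime_uS.ne_zero
private lemma vS_ne : (vS K) ≠ 0 := prime_vS.ne_zero
private lemma wS_ne : (wS K) ≠ 0 := prime_wS.ne_zero

end SecE


open MvPolynomial

/-- `θ` is an `S`-basis of the set `D` of derivation coefficient vectors:
each `θ j ∈ D` and every `g ∈ D` is a unique `S`-linear combination of the `θ j`. -/
def isBasisOf {K : Type} [Field K] {ℓ n : ℕ}
    (D : (Fin ℓ → MvPolynomial (Fin ℓ) K) → Prop)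
    (θ : Fin n → Fin ℓ → MvPolynomial (Fin ℓ) K) : Prop :=
  (∀ j, D (θ j)) ∧
    ∀ g, D g → ∃! c : Fin n → MvPolynomial (Fin ℓ) K, g = ∑ j, c j • θ j

/-- The derivation `∑ f i ∂/∂x i` is homogeneous of polynomial degree `p`. -/
def homogOf {K : Type} [Field K] {ℓ : ℕ}
    (f : Fin ℓ → MvPolynomial (Fin ℓ) K) (p : ℕ) : Prop :=
  ∀ i, f i = 0 ∨ (f i).IsHomogeneous p

/-- `D(B_ℓ, m)` for the braid arrangement with hyperplanes `ker(x_i - x_j)`, `i < j`, and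
constant multiplicity `m`: the derivation `∑ fᵢ ∂/∂xᵢ` sends `x_i - x_j` to `f i - f j`. -/
def braidD (K : Type) [Field K] (ℓ m : ℕ) (f : Fin ℓ → MvPolynomial (Fin ℓ) K) : Prop :=
  ∀ i j : Fin ℓ, i < j → (X i - X j : MvPolynomial (Fin ℓ) K) ^ m ∣ f i - f j

section SecF
variable {K : Type} [Field K] [CharZero K]

private lemma braidD_of {m : ℕ} (f : Fin 3 → MvPolynomial (Fin 3) K)
    (h01 : (uS K)^m ∣ f 0 - f 1) (h12 : (vS K)^m ∣ f 1 - f 2)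
    (h02 : (wS K)^m ∣ f 0 - f 2) :
    braidD K 3 m f := by
  intro i j hij
  fin_cases i <;> fin_cases j <;>
    first
      | exact absurd hij (by decide)
      | exact h01
      | exact h02
      | exact h12

private theorem main_basis (m : ℕ) :
    ∃ θ : Fin 3 → Fin 3 → MvPolynomial (Fin 3) K,
      isBasisOf (braidD K 3 m) θ ∧
      homogOf (θ 0) 0 ∧ homogOf (θ 1) (m + m/2) ∧ homogOf (θ 2) (m + (m - m/2)) := by
  obtain ⟨A1, B1, C1, A2, B2, C2, e, he, eq1, eq2, dA1, dB1, dC1, dA2, dB2, dC2, hdet⟩ :=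
    onevar_pair (K := K) m
  set k1 := m / 2 with hk1
  set k2 := m - m / 2 with hk2
  have hk12 : k1 + k2 = m := by omega
  set G1 := (uS K)^m * homo K k1 A1 with hG1
  set H1 := (vS K)^m * homo K k1 B1 with hH1
  set G2 := (uS K)^m * homo K k2 A2 with hG2
  set H2 := (vS K)^m * homo K k2 B2 with hH2
  have hsum1 : G1 + H1 + (wS K)^m * homo K k1 C1 = 0 := transfer m k1 A1 B1 C1 dA1 dB1 dC1 eq1
  have hsum2 : G2 + H2 + (wS K)^m * homo K k2 C2 = 0 := transfer m k2 A2 B2 C2 dA2 dB2 dC2 eq2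
  have hdethomo : homo K k1 A1 * homo K k2 B2 - homo K k2 A2 * homo K k1 B1
      = MvPolynomial.C e * (wS K)^m := by
    have h1 : homo K (k1 + k2) (A1*B2) = homo K k1 A1 * homo K k2 B2 :=
      homo_mul _ _ dA1 _ _ dB2
    have h2 : homo K (k2 + k1) (A2*B1) = homo K k2 A2 * homo K k1 B1 :=
      homo_mul _ _ dA2 _ _ dB1
    rw [hk12] at h1
    rw [show k2 + k1 = m from by omega] at h2
    rw [← h1, ← h2, ← homo_sub, hdet, homo_Cmul, homo_Xp1pow]
  set Δ := MvPolynomial.C e * ((uS K)^m * ((vS K)^m * (wS K)^m)) with hΔ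
  have hdetS : G1 * H2 - G2 * H1 = Δ := by
    rw [hG1, hH1, hG2, hH2, hΔ]
    linear_combination ((uS K)^m * (vS K)^m) * hdethomo
  have hΔne : Δ ≠ 0 := by
    rw [hΔ]
    refine mul_ne_zero (by simpa using he) ?_
    exact mul_ne_zero (pow_ne_zero _ uS_ne)
      (mul_ne_zero (pow_ne_zero _ vS_ne) (pow_ne_zero _ wS_ne))
  set θ : Fin 3 → Fin 3 → MvPolynomial (Fin 3) K :=
    ![![1,1,1], ![G1, 0, -H1], ![G2, 0, -H2]] with hθ
  refine ⟨θ, ⟨?_, ?_⟩, ?_, ?_, ?_⟩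
  · -- membership
    have mem0 : braidD K 3 m ![1,1,1] := by
      refine braidD_of _ ?_ ?_ ?_ <;>
        · show _ ∣ (1:MvPolynomial (Fin 3) K) - 1
          rw [sub_self]
          exact dvd_zero _
    have mem1 : braidD K 3 m ![G1, 0, -H1] := by
      refine braidD_of _ ?_ ?_ ?_
      · show (uS K)^m ∣ G1 - 0
        rw [sub_zero, hG1]; exact Dvd.intro _ rfl
      · show (vS K)^m ∣ (0:MvPolynomial (Fin 3) K) - -H1
        rw [zero_sub, neg_neg, hH1]; exact Dvd.intro _ rfl
      · show (wS K)^m ∣ G1 - -H1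
        rw [sub_neg_eq_add]
        exact ⟨-(homo K k1 C1), by linear_combination hsum1⟩
    have mem2 : braidD K 3 m ![G2, 0, -H2] := by
      refine braidD_of _ ?_ ?_ ?_
      · show (uS K)^m ∣ G2 - 0
        rw [sub_zero, hG2]; exact Dvd.intro _ rfl
      · show (vS K)^m ∣ (0:MvPolynomial (Fin 3) K) - -H2
        rw [zero_sub, neg_neg, hH2]; exact Dvd.intro _ rfl
      · show (wS K)^m ∣ G2 - -H2
        rw [sub_neg_eq_add]
        exact ⟨-(homo K k2 C2), by linear_combination hsum2⟩
    intro j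
    fin_cases j
    · exact mem0
    · exact mem1
    · exact mem2
  · -- unique representation
    intro g hg
    have hu : (uS K)^m ∣ g 0 - g 1 := hg 0 1 (by decide)
    have hv : (vS K)^m ∣ g 1 - g 2 := hg 1 2 (by decide)
    have hw : (wS K)^m ∣ g 0 - g 2 := hg 0 2 (by decide)
    have hG1dvd : (uS K)^m ∣ G1 := Dvd.intro _ rfl
    have hG2dvd : (uS K)^m ∣ G2 := Dvd.intro _ rfl
    have hH1dvd : (vS K)^m ∣ H1 := Dvd.intro _ rfl
    have hH2dvd : (vS K)^m ∣ H2 := Dvd.intro _ rfl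
    have hGH1dvd : (wS K)^m ∣ G1 + H1 := ⟨-(homo K k1 C1), by linear_combination hsum1⟩
    have hGH2dvd : (wS K)^m ∣ G2 + H2 := ⟨-(homo K k2 C2), by linear_combination hsum2⟩
    set t1 := (g 0 - g 1) * H2 - (g 1 - g 2) * G2 with ht1
    set t2 := (g 1 - g 2) * G1 - (g 0 - g 1) * H1 with ht2
    have ht1u : (uS K)^m ∣ t1 := dvd_sub (hu.mul_right _) (hG2dvd.mul_left _)
    have ht1v : (vS K)^m ∣ t1 := dvd_sub (hH2dvd.mul_left _) (hv.mul_right _)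
    have ht1w : (wS K)^m ∣ t1 := by
      have e1 : t1 = (g 0 - g 1) * (G2 + H2) - (g 0 - g 2) * G2 := by rw [ht1]; ring
      rw [e1]
      exact dvd_sub (hGH2dvd.mul_left _) (hw.mul_right _)
    have ht2u : (uS K)^m ∣ t2 := dvd_sub (hG1dvd.mul_left _) (hu.mul_right _)
    have ht2v : (vS K)^m ∣ t2 := dvd_sub (hv.mul_right _) (hH1dvd.mul_left _)
    have ht2w : (wS K)^m ∣ t2 := by
      have e2 : t2 = (g 0 - g 2) * G1 - (g 0 - g 1) * (G1 + H1) := by rw [ht2]; ring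
      rw [e2]
      exact dvd_sub (hw.mul_right _) (hGH1dvd.mul_left _)
    obtain ⟨s1, hs1⟩ := triple_dvd m ht1u ht1v ht1w
    obtain ⟨s2, hs2⟩ := triple_dvd m ht2u ht2v ht2w
    set c1 := MvPolynomial.C e⁻¹ * s1 with hc1
    set c2 := MvPolynomial.C e⁻¹ * s2 with hc2
    have hCee : MvPolynomial.C e * MvPolynomial.C e⁻¹ = (1 : MvPolynomial (Fin 3) K) := by
      rw [← map_mul, mul_inv_cancel₀ he, map_one]
    have hΔc1 : Δ * c1 = t1 := by
      rw [hΔ, hc1, hs1]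
      calc MvPolynomial.C e * ((uS K)^m * ((vS K)^m * (wS K)^m))
            * (MvPolynomial.C e⁻¹ * s1)
          = (MvPolynomial.C e * MvPolynomial.C e⁻¹)
            * ((uS K)^m * ((vS K)^m * (wS K)^m) * s1) := by ring
        _ = (uS K)^m * (vS K)^m * (wS K)^m * s1 := by rw [hCee]; ring
    have hΔc2 : Δ * c2 = t2 := by
      rw [hΔ, hc2, hs2]
      calc MvPolynomial.C e * ((uS K)^m * ((vS K)^m * (wS K)^m))
            * (MvPolynomial.C e⁻¹ * s2)
          = (MvPolynomial.C e * MvPolynomial.C e⁻¹)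
            * ((uS K)^m * ((vS K)^m * (wS K)^m) * s2) := by ring
        _ = (uS K)^m * (vS K)^m * (wS K)^m * s2 := by rw [hCee]; ring
    have idp : c1 * G1 + c2 * G2 = g 0 - g 1 := by
      refine mul_left_cancel₀ hΔne ?_
      calc Δ * (c1 * G1 + c2 * G2) = (Δ * c1) * G1 + (Δ * c2) * G2 := by ring
        _ = t1 * G1 + t2 * G2 := by rw [hΔc1, hΔc2]
        _ = (g 0 - g 1) * (G1 * H2 - G2 * H1) := by rw [ht1, ht2]; ring
        _ = Δ * (g 0 - g 1) := by rw [hdetS]; ring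
    have idq : c1 * H1 + c2 * H2 = g 1 - g 2 := by
      refine mul_left_cancel₀ hΔne ?_
      calc Δ * (c1 * H1 + c2 * H2) = (Δ * c1) * H1 + (Δ * c2) * H2 := by ring
        _ = t1 * H1 + t2 * H2 := by rw [hΔc1, hΔc2]
        _ = (g 1 - g 2) * (G1 * H2 - G2 * H1) := by rw [ht1, ht2]; ring
        _ = Δ * (g 1 - g 2) := by rw [hdetS]; ring
    refine ⟨![g 1, c1, c2], ?_, ?_⟩
    · funext i
      rw [Fin.sum_univ_three]
      fin_cases i
      · show g 0 = g 1 * 1 + c1 * G1 + c2 * G2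
        linear_combination -idp
      · show g 1 = g 1 * 1 + c1 * 0 + c2 * 0
        ring
      · show g 2 = g 1 * 1 + c1 * -H1 + c2 * -H2
        linear_combination idq
    · intro y hy
      have hcomp := fun i : Fin 3 => congrFun hy i
      rw [Fin.sum_univ_three] at hcomp
      have h0 : g 0 = y 0 * 1 + y 1 * G1 + y 2 * G2 := hcomp 0
      have h1 : g 1 = y 0 * 1 + y 1 * 0 + y 2 * 0 := hcomp 1
      have h2 : g 2 = y 0 * 1 + y 1 * -H1 + y 2 * -H2 := hcomp 2
      have hy0 : y 0 = g 1 := by linear_combination -h1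
      have hyp : y 1 * G1 + y 2 * G2 = g 0 - g 1 := by linear_combination -h0 - hy0
      have hyq : y 1 * H1 + y 2 * H2 = g 1 - g 2 := by linear_combination h2 + hy0
      have hy1 : y 1 = c1 := by
        refine mul_left_cancel₀ hΔne ?_
        calc Δ * y 1 = (y 1 * G1 + y 2 * G2) * H2 - (y 1 * H1 + y 2 * H2) * G2 := by
              rw [← hdetS]; ring
          _ = t1 := by rw [hyp, hyq, ht1]
          _ = Δ * c1 := hΔc1.symm
      have hy2 : y 2 = c2 := by
        refine mul_left_cancel₀ hΔne ?_
        calc Δ * y 2 = (y 1 * H1 + y 2 * H2) * G1 - (y 1 * G1 + y 2 * G2) * H1 := by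
              rw [← hdetS]; ring
          _ = t2 := by rw [hyp, hyq, ht2]
          _ = Δ * c2 := hΔc2.symm
      funext i
      fin_cases i
      · exact hy0
      · exact hy1
      · exact hy2
  · -- homogOf θ 0
    intro i
    right
    fin_cases i <;> exact MvPolynomial.isHomogeneous_one _ _
  · -- homogOf θ 1
    intro i
    fin_cases i
    · right
      show G1.IsHomogeneous (m + m/2)
      rw [hG1]
      have h := ((uS_hom (K := K)).pow m).mul (homo_hom k1 A1)
      rwa [one_mul] at h
    · left; rfl
    · right
      show (-H1).IsHomogeneous (m + m/2)
      refine MvPolynomial.IsHomogeneous.neg ?_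
      rw [hH1]
      have h := ((vS_hom (K := K)).pow m).mul (homo_hom k1 B1)
      rwa [one_mul] at h
  · -- homogOf θ 2
    intro i
    fin_cases i
    · right
      show G2.IsHomogeneous (m + (m - m/2))
      rw [hG2]
      have h := ((uS_hom (K := K)).pow m).mul (homo_hom k2 A2)
      rwa [one_mul] at h
    · left; rfl
    · right
      show (-H2).IsHomogeneous (m + (m - m/2))
      refine MvPolynomial.IsHomogeneous.neg ?_
      rw [hH2]
      have h := ((vS_hom (K := K)).pow m).mul (homo_hom k2 B2)
      rwa [one_mul] at h

end SecF

/-- For the braid arrangement `A₂` in `K³` with constant multiplicity `m`, `D(A₂, m)` is free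
with exponents `{0, 3m/2, 3m/2}` for `m` even and `{0, (3m-1)/2, (3m+1)/2}` for `m` odd
(the exponent 0 corresponding to the invariant direction `∂₁+∂₂+∂₃`). -/
theorem stmt5 {K : Type} [Field K] [CharZero K] (m : ℕ) :
    (Even m → ∃ θ : Fin 3 → Fin 3 → MvPolynomial (Fin 3) K,
        isBasisOf (braidD K 3 m) θ ∧
        homogOf (θ 0) 0 ∧ homogOf (θ 1) (3 * m / 2) ∧ homogOf (θ 2) (3 * m / 2)) ∧
    (Odd m → ∃ θ : Fin 3 → Fin 3 → MvPolynomial (Fin 3) K,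
        isBasisOf (braidD K 3 m) θ ∧
        homogOf (θ 0) 0 ∧ homogOf (θ 1) ((3 * m - 1) / 2) ∧
        homogOf (θ 2) ((3 * m + 1) / 2)) := by
  obtain ⟨θ, hbasis, h0, h1, h2⟩ := main_basis (K := K) m
  constructor
  · rintro ⟨r, hr⟩
    have e1 : 3 * m / 2 = m + m / 2 := by omega
    have e2 : 3 * m / 2 = m + (m - m / 2) := by omega
    rw [e1]
    refine ⟨θ, hbasis, h0, h1, ?_⟩
    rw [show m + m / 2 = m + (m - m / 2) from by omega]
    exact h2
  · rintro ⟨r, hr⟩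
    have e1 : (3 * m - 1) / 2 = m + m / 2 := by omega
    have e2 : (3 * m + 1) / 2 = m + (m - m / 2) := by omega
    rw [e1, e2]
    exact ⟨θ, hbasis, h0, h1, h2⟩
end

section
/- Mixed multiplicity freeness for type A (Corollary): for m, q ≥ 1, the multiarrangement on the type A_{ℓ-1} Coxeter arrangement with defining polynomial Q = Π_{2 ≤ j ≤ ℓ}(x_1 - x_j)^{m+q} · Π_{2 ≤ i < j ≤ ℓ}(x_i - x_j)^m is free, with exponents {mℓ/2 + q, ..., mℓ/2 + q} (ℓ-1 copies) when m is even, and {(m-1)ℓ/2 + 1 + q, (m-1)ℓ/2 + 2 + q, ..., (m-1)ℓ/2 + ℓ - 1 + q} when m is odd. -/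
open MvPolynomial

/-- `D(A; m, q)` for the mixed multiplicity on the type `A_{ℓ-1}` Coxeter arrangement:
multiplicity `m + q` on `ker(x₁ - x_j)` for `j ≥ 2` and `m` on `ker(x_i - x_j)` for
`2 ≤ i < j`. -/
def mixedD (K : Type) [Field K] (ℓ : ℕ) [NeZero ℓ] (m q : ℕ)
    (f : Fin ℓ → MvPolynomial (Fin ℓ) K) : Prop :=
  (∀ j : Fin ℓ, 0 < (j : ℕ) →
      (X 0 - X j : MvPolynomial (Fin ℓ) K) ^ (m + q) ∣ f 0 - f j) ∧
  (∀ i j : Fin ℓ, 0 < (i : ℕ) → i < j →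
      (X i - X j : MvPolynomial (Fin ℓ) K) ^ m ∣ f i - f j)


set_option linter.unusedSectionVars false
set_option linter.dupNamespace false
set_option linter.unnecessarySimpa false
set_option linter.unusedVariables false
namespace Stmt14Aux

variable {R : Type} [CommRing R] [IsDomain R] [Algebra ℚ R]

variable {R : Type} [CommRing R] [IsDomain R] [Algebra ℚ R]

local notation "PX" => Polynomial.X
local notation "PC" => Polynomial.C

/-- formal antiderivative with zero constant term -/
noncomputable def integ (p : Polynomial R) : Polynomial R :=
  p.sum fun i a => Polynomial.C ((((i : ℚ)+1)⁻¹) • a) * Polynomial.X ^ (i+1)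

lemma smul_mul_natCast (i : ℕ) (a : R) : (((i : ℚ)+1)⁻¹ • a) * ((i+1 : ℕ) : R) = a := by
  have h1 : ((i:ℚ)+1)⁻¹ * ((i+1 : ℕ) : ℚ) = 1 := by
    push_cast
    rw [inv_mul_cancel₀ (by positivity)]
  rw [Algebra.smul_def, mul_assoc, ← map_natCast (algebraMap ℚ R) (i+1), mul_comm a,
    ← mul_assoc, ← map_mul, h1, map_one, one_mul]

lemma derivative_integ (p : Polynomial R) : (integ p).derivative = p := by
  unfold integ
  rw [Polynomial.sum, Polynomial.derivative_sum]
  conv_rhs => rw [← Polynomial.sum_C_mul_X_pow_eq p, Polynomial.sum]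
  refine Finset.sum_congr rfl fun i _ => ?_
  rw [Polynomial.derivative_C_mul_X_pow, Nat.add_sub_cancel, smul_mul_natCast]

lemma coeff_integ (p : Polynomial R) (i : ℕ) :
    (integ p).coeff (i+1) = (((i : ℚ)+1)⁻¹) • p.coeff i := by
  unfold integ
  rw [Polynomial.sum, Polynomial.finset_sum_coeff]
  simp only [Polynomial.coeff_C_mul, Polynomial.coeff_X_pow]
  rw [Finset.sum_eq_single i]
  · rw [if_pos rfl, mul_one]
  · intro b _ hb
    rw [if_neg (by omega), mul_zero]
  · intro h
    rw [Polynomial.notMem_support_iff] at h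
    simp [h]

lemma coeff_integ_zero (p : Polynomial R) : (integ p).coeff 0 = 0 := by
  unfold integ
  rw [Polynomial.sum, Polynomial.finset_sum_coeff]
  apply Finset.sum_eq_zero
  intro b _
  simp [Polynomial.coeff_C_mul, Polynomial.coeff_X_pow]

lemma natDegree_integ_le (p : Polynomial R) : (integ p).natDegree ≤ p.natDegree + 1 := by
  rw [Polynomial.natDegree_le_iff_coeff_eq_zero]
  intro i hi
  obtain ⟨j, rfl⟩ : ∃ j, i = j + 1 := ⟨i - 1, by omega⟩
  rw [coeff_integ, Polynomial.coeff_eq_zero_of_natDegree_lt (by omega), smul_zero]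

/-- if a polynomial has derivative C c * ψ then c divides differences of its values. -/
lemma dvd_eval_sub_of_derivative [CharZero R] (c : R) (φ ψ : Polynomial R)
    (h : φ.derivative = Polynomial.C c * ψ) (u v : R) :
    c ∣ φ.eval u - φ.eval v := by
  have hd : (φ - Polynomial.C c * integ ψ).derivative = 0 := by
    rw [Polynomial.derivative_sub, Polynomial.derivative_C_mul, derivative_integ, h, sub_self]
  have hdc := Polynomial.eq_C_of_derivative_eq_zero hd
  have h1 : φ.eval u - φ.eval v
      = c * ((integ ψ).eval u - (integ ψ).eval v) := by
    have hu := congrArg (Polynomial.eval u) hdc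
    have hv := congrArg (Polynomial.eval v) hdc
    simp only [Polynomial.eval_sub, Polynomial.eval_mul, Polynomial.eval_C] at hu hv
    have := sub_eq_sub_iff_sub_eq_sub.mp (hu.trans hv.symm)
    linear_combination this
  rw [h1]
  exact Dvd.intro _ rfl


/-- Key: if `(X-C a)^p (X-C b)^r` divides `G`, then `(b-a)^(p+r+1)` divides the
difference of values of the antiderivative of `G` at `b` and `a`. -/
lemma key_dvd [CharZero R] (a b : R) (G : Polynomial R) (p r : ℕ)
    (h : (PX - PC a)^p * (PX - PC b)^r ∣ G) :
    (b - a)^(p+r+1) ∣ (integ G).eval b - (integ G).eval a := by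
  obtain ⟨H, rfl⟩ := h
  set F := integ ((PX - PC a)^p * (PX - PC b)^r * H) with hF
  set inner : Polynomial R := PC a + PC (b-a) * PX with hinner
  set φ := F.comp inner with hφ
  have heval1 : φ.eval 1 = F.eval b := by
    rw [hφ, Polynomial.eval_comp]; congr 1; simp [hinner]
  have heval0 : φ.eval 0 = F.eval a := by
    rw [hφ, Polynomial.eval_comp]; congr 1; simp [hinner]
  have hder : φ.derivative =
      PC ((b-a)^(p+r+1)) * (PX^p * (PX - 1)^r * H.comp inner) := by
    rw [hφ, Polynomial.derivative_comp, derivative_integ]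
    have h1 : Polynomial.derivative inner = PC (b - a) := by
      simp [hinner]
    have h2 : (PX - PC a).comp inner = PC (b-a) * PX := by
      simp [hinner]
    have h3 : (PX - PC b).comp inner = PC (b-a) * (PX - 1) := by
      simp [hinner]; ring
    rw [h1, Polynomial.mul_comp, Polynomial.mul_comp, Polynomial.pow_comp,
      Polynomial.pow_comp, h2, h3]
    rw [mul_pow, mul_pow, ← Polynomial.C_pow, ← Polynomial.C_pow]
    rw [pow_add, pow_add, pow_one, Polynomial.C_mul, Polynomial.C_mul]
    ring
  have := dvd_eval_sub_of_derivative ((b-a)^(p+r+1)) φ _ hder 1 0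
  rwa [heval1, heval0] at this

lemma pow_sub_dvd_of_dvd_derivative [CharZero R] (a : R) (e : ℕ) (P : Polynomial R)
    (h1 : (PX - PC a)^e ∣ P.derivative) (h2 : P.eval a = 0) :
    (PX - PC a)^(e+1) ∣ P := by
  set Q := P.comp (PX + PC a) with hQ
  have hQder : Q.derivative = P.derivative.comp (PX + PC a) := by
    rw [hQ, Polynomial.derivative_comp]; simp
  have hXe : (PX : Polynomial R)^e ∣ Q.derivative := by
    obtain ⟨u, hu⟩ := h1
    refine ⟨u.comp (PX + PC a), ?_⟩
    rw [hQder, hu, Polynomial.mul_comp, Polynomial.pow_comp, Polynomial.sub_comp,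
      Polynomial.X_comp, Polynomial.C_comp]
    simp
  have hcoeff : ∀ d < e + 1, Q.coeff d = 0 := by
    intro d hd
    rcases Nat.eq_zero_or_pos d with hd0 | hd0
    · subst hd0
      rw [Polynomial.coeff_zero_eq_eval_zero, hQ, Polynomial.eval_comp]
      simpa using h2
    · obtain ⟨d', rfl⟩ : ∃ d', d = d' + 1 := ⟨d - 1, by omega⟩
      have := Polynomial.X_pow_dvd_iff.mp hXe d' (by omega)
      rw [Polynomial.coeff_derivative] at this
      have hne : ((d' : R) + 1) ≠ 0 := Nat.cast_add_one_ne_zero d'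
      exact (mul_eq_zero.mp this).resolve_right hne
  obtain ⟨u, hu⟩ := Polynomial.X_pow_dvd_iff.mpr hcoeff
  have hPQ : P = Q.comp (PX - PC a) := by
    rw [hQ, Polynomial.comp_assoc]
    simp
  rw [hPQ, hu, Polynomial.mul_comp, Polynomial.pow_comp, Polynomial.X_comp]
  exact Dvd.intro _ rfl

lemma prod_pow_dvd {ι : Type} (s : Finset ι) (p : ι → R) (k : ι → ℕ) (d : R)
    (hp : ∀ i ∈ s, Prime (p i))
    (hnd : ∀ i ∈ s, ∀ j ∈ s, i ≠ j → ¬ p i ∣ p j)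
    (h : ∀ i ∈ s, p i ^ k i ∣ d) :
    (∏ i ∈ s, p i ^ k i) ∣ d := by
  classical
  induction s using Finset.induction_on with
  | empty => simpa using one_dvd d
  | insert a s ha ih =>
    rw [Finset.prod_insert ha]
    have hprime : Prime (p a) := hp a (Finset.mem_insert_self a s)
    have hrest : (∏ i ∈ s, p i ^ k i) ∣ d := by
      refine ih (fun i hi => hp i (Finset.mem_insert_of_mem hi))
        (fun i hi j hj hij => hnd i (Finset.mem_insert_of_mem hi) j
          (Finset.mem_insert_of_mem hj) hij)
        (fun i hi => h i (Finset.mem_insert_of_mem hi))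
    obtain ⟨d₁, hd₁⟩ := hrest
    have hnotdvd : ¬ p a ∣ ∏ i ∈ s, p i ^ k i := by
      intro hdvd
      obtain ⟨i, hi, hdvd'⟩ := hprime.exists_mem_finset_dvd hdvd
      have : p a ∣ p i := hprime.dvd_of_dvd_pow hdvd'
      exact hnd a (Finset.mem_insert_self a s) i (Finset.mem_insert_of_mem hi)
        (fun hai => ha (hai ▸ hi)) this
    have hka : p a ^ k a ∣ d₁ := by
      refine hprime.pow_dvd_of_dvd_mul_left (k a) hnotdvd ?_
      rw [← hd₁]; exact h a (Finset.mem_insert_self a s)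
    obtain ⟨d₂, hd₂⟩ := hka
    exact ⟨d₂, by rw [hd₁, hd₂]; ring⟩


lemma not_X_sub_C_dvd {a b : R} (hab : a ≠ b) :
    ¬ ((PX - PC a : Polynomial R) ∣ (PX - PC b)) := by
  rintro ⟨u, hu⟩
  have hu0 : u ≠ 0 := by
    rintro rfl
    rw [mul_zero] at hu
    exact Polynomial.X_sub_C_ne_zero b hu
  have hdeg : u.natDegree = 0 := by
    have := congrArg Polynomial.natDegree hu
    rw [Polynomial.natDegree_X_sub_C, Polynomial.natDegree_mul
      (Polynomial.X_sub_C_ne_zero a) hu0, Polynomial.natDegree_X_sub_C] at this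
    omega
  obtain ⟨c, rfl⟩ := Polynomial.natDegree_eq_zero.mp hdeg
  have heval := congrArg (Polynomial.eval b) hu
  simp only [Polynomial.eval_sub, Polynomial.eval_X, Polynomial.eval_C, sub_self,
    Polynomial.eval_mul] at heval
  have hc : c = 0 := by
    rcases mul_eq_zero.mp heval.symm with h | h
    · exact absurd (sub_eq_zero.mp h).symm hab
    · exact h
  exact hu0 (by rw [hc, map_zero])

variable {K : Type} [Field K] [CharZero K] {n : ℕ}

lemma prime_X_sub_X {i j : Fin (n+1)} (hij : i ≠ j) :
    Prime (X i - X j : MvPolynomial (Fin (n+1)) K) := by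
  set σ := Equiv.swap i 0 with hσ
  set e := (renameEquiv K σ).trans (finSuccEquiv K n) with he
  have hσi : σ i = 0 := Equiv.swap_apply_left i 0
  have hσj : σ j ≠ 0 := by
    intro h
    have := σ.injective (h.trans hσi.symm)
    exact hij this.symm
  obtain ⟨k, hk⟩ := Fin.exists_succ_eq_of_ne_zero hσj
  have himg : e (X i - X j) = PX - PC (X k) := by
    rw [he]
    simp only [AlgEquiv.trans_apply, map_sub, renameEquiv_apply, rename_X, hσi, ← hk,
      finSuccEquiv_X_zero, finSuccEquiv_X_succ]
  have hprime : Prime (e (X i - X j)) := by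
    rw [himg]; exact Polynomial.prime_X_sub_C _
  exact (MulEquiv.prime_iff e).mp hprime

lemma not_dvd_of_eval (p q : MvPolynomial (Fin (n+1)) K) (v : Fin (n+1) → K)
    (hp : eval v p = 0) (hq : eval v q ≠ 0) : ¬ p ∣ q := by
  rintro ⟨u, rfl⟩
  exact hq (by rw [map_mul, hp, zero_mul])

lemma X_sub_X_not_dvd {i j k l : Fin (n+1)} (hij : i < j) (hkl : k < l)
    (hne : ¬(i = k ∧ j = l)) :
    ¬ ((X i - X j : MvPolynomial (Fin (n+1)) K) ∣ X k - X l) := by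
  have hijne : i ≠ j := ne_of_lt hij
  have hklne : k ≠ l := ne_of_lt hkl
  by_cases hk : k = i ∨ k = j
  · have hil : i ≠ l := by
      rcases hk with rfl | rfl
      · exact ne_of_lt hkl
      · exact ne_of_lt (lt_trans hij hkl)
    have hjl : j ≠ l := by
      rcases hk with rfl | rfl
      · intro hjl; exact hne ⟨rfl, hjl⟩
      · exact ne_of_lt hkl
    refine not_dvd_of_eval _ _ (fun s => if s = l then 1 else 0) ?_ ?_
    · simp [hil, hjl]
    · simp [hklne, (ne_of_lt hkl).symm]
  · push_neg at hk
    refine not_dvd_of_eval _ _ (fun s => if s = k then 1 else 0) ?_ ?_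
    · have h1 : i ≠ k := fun h => hk.1 h.symm
      have h2 : j ≠ k := fun h => hk.2 h.symm
      simp [h1, h2]
    · simp [(ne_of_lt hkl).symm]

/-- graded predicate: `P` (a polynomial in an auxiliary variable `t` over `MvPolynomial`)
is homogeneous of total degree `d` where `t` counts with degree 1 -/
def HG (P : Polynomial (MvPolynomial (Fin (n+1)) K)) (d : ℕ) : Prop :=
  ∀ i, (P.coeff i).IsHomogeneous (d - i) ∧ (d < i → P.coeff i = 0)

lemma HG.mul {P Q : Polynomial (MvPolynomial (Fin (n+1)) K)} {a b : ℕ}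
    (hP : HG P a) (hQ : HG Q b) : HG (P * Q) (a + b) := by
  intro N
  rw [Polynomial.coeff_mul]
  constructor
  · apply MvPolynomial.IsHomogeneous.sum
    rintro ⟨u, v⟩ huv
    rw [Finset.HasAntidiagonal.mem_antidiagonal] at huv
    by_cases hu : a < u
    · rw [(hP u).2 hu, zero_mul]
      exact isHomogeneous_zero _ _ _
    · by_cases hv : b < v
      · rw [(hQ v).2 hv, mul_zero]
        exact isHomogeneous_zero _ _ _
      · push_neg at hu hv
        have : (a - u) + (b - v) = a + b - N := by omega
        exact this ▸ ((hP u).1.mul (hQ v).1)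
  · intro hN
    apply Finset.sum_eq_zero
    rintro ⟨u, v⟩ huv
    rw [Finset.HasAntidiagonal.mem_antidiagonal] at huv
    by_cases hu : a < u
    · rw [(hP u).2 hu, zero_mul]
    · push_neg at hu
      rw [(hQ v).2 (by omega), mul_zero]

lemma HG.one : HG (1 : Polynomial (MvPolynomial (Fin (n+1)) K)) 0 := by
  intro i
  constructor
  · rcases Nat.eq_zero_or_pos i with rfl | hi
    · simpa using isHomogeneous_one _ _
    · rw [Polynomial.coeff_one, if_neg (by omega)]
      exact isHomogeneous_zero _ _ _
  · intro hi
    rw [Polynomial.coeff_one, if_neg (by omega)]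

lemma HG.pow {P : Polynomial (MvPolynomial (Fin (n+1)) K)} {a : ℕ}
    (hP : HG P a) (s : ℕ) : HG (P ^ s) (a * s) := by
  induction s with
  | zero => simpa using HG.one
  | succ s ih =>
    rw [pow_succ, Nat.mul_succ]
    exact ih.mul hP

lemma HG.prod {ι : Type} (s : Finset ι) (P : ι → Polynomial (MvPolynomial (Fin (n+1)) K))
    (d : ι → ℕ) (h : ∀ i ∈ s, HG (P i) (d i)) :
    HG (∏ i ∈ s, P i) (∑ i ∈ s, d i) := by
  classical
  induction s using Finset.induction_on with
  | empty => simpa using HG.one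
  | insert a s ha ih =>
    rw [Finset.prod_insert ha, Finset.sum_insert ha]
    exact (h a (Finset.mem_insert_self a s)).mul
      (ih (fun i hi => h i (Finset.mem_insert_of_mem hi)))

lemma HG.X_sub_C {a : MvPolynomial (Fin (n+1)) K} (ha : a.IsHomogeneous 1) :
    HG (PX - PC a) 1 := by
  intro i
  have hx : ∀ i', (PX : Polynomial (MvPolynomial (Fin (n+1)) K)).coeff (i'+2) = 0 := by
    intro i'
    rw [Polynomial.coeff_X, if_neg (by omega)]
  constructor
  · match i with
    | 0 => simpa using (isHomogeneous_zero _ _ 1).sub ha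
    | 1 => simpa using isHomogeneous_one _ _
    | (i+2) =>
      rw [Polynomial.coeff_sub, hx, Polynomial.coeff_C, if_neg (by omega), sub_zero]
      exact isHomogeneous_zero _ _ _
  · intro hi
    match i with
    | (i+2) =>
      rw [Polynomial.coeff_sub, hx, Polynomial.coeff_C, if_neg (by omega), sub_zero]
    | 1 => omega

lemma HG.Xp : HG (PX : Polynomial (MvPolynomial (Fin (n+1)) K)) 1 := by
  intro i
  have hx : ∀ i', (PX : Polynomial (MvPolynomial (Fin (n+1)) K)).coeff (i'+2) = 0 := by
    intro i'
    rw [Polynomial.coeff_X, if_neg (by omega)]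
  constructor
  · match i with
    | 0 => simpa using isHomogeneous_zero _ _ _
    | 1 => simpa using isHomogeneous_one _ _
    | (i+2) =>
      rw [hx]
      exact isHomogeneous_zero _ _ _
  · intro hi
    match i with
    | (i+2) => rw [hx]
    | 1 => omega

lemma HG.integ {P : Polynomial (MvPolynomial (Fin (n+1)) K)} {d : ℕ}
    (hP : HG P d) : HG (Stmt14Aux.integ P) (d + 1) := by
  intro i
  match i with
  | 0 =>
    constructor
    · rw [coeff_integ_zero]; exact isHomogeneous_zero _ _ _
    · intro h; exact coeff_integ_zero P
  | (i+1) =>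
    rw [coeff_integ]
    constructor
    · have : (d + 1) - (i + 1) = d - i := by omega
      rw [this]
      intro d hd
      rw [MvPolynomial.coeff_smul] at hd
      exact (hP i).1 (fun h => hd (by rw [h, smul_zero]))
    · intro h
      rw [(hP i).2 (by omega), smul_zero]

lemma HG.eval_X {P : Polynomial (MvPolynomial (Fin (n+1)) K)} {d : ℕ}
    (hP : HG P d) (j : Fin (n+1)) :
    (P.eval (X j)).IsHomogeneous d := by
  rw [Polynomial.eval_eq_sum_range]
  apply MvPolynomial.IsHomogeneous.sum
  intro i _
  by_cases hi : d < i
  · rw [(hP i).2 hi, zero_mul]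
    exact isHomogeneous_zero _ _ _
  · push_neg at hi
    have h1 : (P.coeff i * X j ^ i).IsHomogeneous ((d - i) + i) :=
      (hP i).1.mul (by simpa using (isHomogeneous_X K j).pow i)
    have : (d - i) + i = d := by omega
    rwa [this] at h1

def Pairs (n : ℕ) : Finset (Fin (n+1) × Fin (n+1)) :=
  Finset.univ.filter (fun p => p.1 < p.2)

def nu (m q : ℕ) (p : Fin (n+1) × Fin (n+1)) : ℕ := if p.1 = 0 then m + q else m

noncomputable def Qpoly (K : Type) [Field K] (n m q : ℕ) : MvPolynomial (Fin (n+1)) K :=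
  ∏ p ∈ Pairs n, (X p.1 - X p.2) ^ (nu m q p)

lemma mem_Pairs {p : Fin (n+1) × Fin (n+1)} : p ∈ Pairs n ↔ p.1 < p.2 := by
  simp [Pairs]

lemma X_sub_X_ne_zero {i j : Fin (n+1)} (h : i ≠ j) :
    (X i - X j : MvPolynomial (Fin (n+1)) K) ≠ 0 :=
  sub_ne_zero.mpr (fun hh => h (X_injective hh))

lemma Qpoly_ne_zero (m q : ℕ) : Qpoly K n m q ≠ 0 := by
  rw [Qpoly, Finset.prod_ne_zero_iff]
  intro p hp
  exact pow_ne_zero _ (X_sub_X_ne_zero (ne_of_lt (mem_Pairs.mp hp)))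

lemma Qpoly_isHomogeneous (m q : ℕ) :
    (Qpoly K n m q).IsHomogeneous (∑ p ∈ Pairs n, nu m q p) := by
  apply MvPolynomial.IsHomogeneous.prod
  intro p _
  have h1 : (X p.1 - X p.2 : MvPolynomial (Fin (n+1)) K).IsHomogeneous 1 :=
    (isHomogeneous_X K p.1).sub (isHomogeneous_X K p.2)
  simpa using h1.pow (nu m q p)

lemma det_isHomogeneous (A : Matrix (Fin n) (Fin n) (MvPolynomial (Fin (n+1)) K))
    (δ : Fin n → ℕ) (h : ∀ j k, (A j k).IsHomogeneous (δ k)) :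
    A.det.IsHomogeneous (∑ k, δ k) := by
  rw [Matrix.det_apply]
  apply MvPolynomial.IsHomogeneous.sum
  intro σ _
  have hprod : (∏ i, A (σ i) i).IsHomogeneous (∑ k, δ k) := by
    apply MvPolynomial.IsHomogeneous.prod
    intro i _
    exact h (σ i) i
  rcases Int.units_eq_one_or (Equiv.Perm.sign σ) with hs | hs
  · rw [hs, one_smul]; exact hprod
  · rw [hs, Units.smul_def]
    push_cast
    rw [neg_one_smul]
    exact hprod.neg

lemma Q_dvd_det (m q : ℕ) (A : Matrix (Fin n) (Fin n) (MvPolynomial (Fin (n+1)) K))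
    (h1 : ∀ j k, (X 0 - X (Fin.succ j) : MvPolynomial (Fin (n+1)) K)^(m+q) ∣ A j k)
    (h2 : ∀ i j, i < j → ∀ k,
      (X (Fin.succ i) - X (Fin.succ j) : MvPolynomial (Fin (n+1)) K)^m ∣ A i k - A j k) :
    Qpoly K n m q ∣ A.det := by
  rw [Qpoly]
  apply prod_pow_dvd
  · intro p hp
    exact prime_X_sub_X (ne_of_lt (mem_Pairs.mp hp))
  · intro p hp p' hp' hne
    refine X_sub_X_not_dvd (mem_Pairs.mp hp) (mem_Pairs.mp hp') ?_
    rintro ⟨hf, hs⟩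
    exact hne (Prod.ext hf hs)
  · rintro ⟨i, j⟩ hp
    have hij : i < j := mem_Pairs.mp hp
    rcases eq_or_ne i 0 with rfl | hi0
    · -- multiplicity m + q on hyperplanes through x₀
      obtain ⟨j', rfl⟩ := Fin.exists_succ_eq_of_ne_zero (Fin.pos_iff_ne_zero.mp hij)
      rw [nu, if_pos rfl]
      set c : MvPolynomial (Fin (n+1)) K := (X 0 - X (Fin.succ j'))^(m+q) with hc
      have hch : ∀ k, ∃ u, A j' k = c * u := fun k => h1 j' k
      choose r hr using hch
      have hrow : A j' = c • r := funext fun k => by rw [Pi.smul_apply, smul_eq_mul]; exact hr k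
      refine ⟨(A.updateRow j' r).det, ?_⟩
      conv_lhs => rw [← Matrix.updateRow_eq_self A j', hrow]
      rw [Matrix.det_updateRow_smul]
    · -- multiplicity m on the other hyperplanes
      obtain ⟨i', rfl⟩ := Fin.exists_succ_eq_of_ne_zero hi0
      have hj0 : j ≠ 0 := by
        intro h
        subst h
        exact absurd hij (Fin.not_lt_zero _)
      obtain ⟨j', rfl⟩ := Fin.exists_succ_eq_of_ne_zero hj0
      have hij' : i' < j' := by rwa [Fin.succ_lt_succ_iff] at hij
      rw [nu, if_neg (Fin.succ_ne_zero i')]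
      set c : MvPolynomial (Fin (n+1)) K := (X (Fin.succ i') - X (Fin.succ j'))^m with hc
      choose r hr using fun k => h2 i' j' hij' k
      have hne' : i' ≠ j' := ne_of_lt hij'
      have hrow : A i' + (-1 : MvPolynomial (Fin (n+1)) K) • A j' = c • r := funext fun k => by
        rw [Pi.add_apply, Pi.smul_apply, Pi.smul_apply, smul_eq_mul, smul_eq_mul,
          neg_one_mul, ← sub_eq_add_neg]
        exact hr k
      refine ⟨((A.updateRow i' r)).det, ?_⟩
      rw [← Matrix.det_updateRow_add_smul_self A hne' (-1 : MvPolynomial (Fin (n+1)) K),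
        hrow, Matrix.det_updateRow_smul]

lemma det_eq_C_mul_Q {d : MvPolynomial (Fin (n+1)) K} {D : ℕ} (hd : d.IsHomogeneous D)
    {Q : MvPolynomial (Fin (n+1)) K} (hQ : Q.IsHomogeneous D) (hdvd : Q ∣ d) :
    ∃ c : K, d = C c * Q := by
  obtain ⟨h, rfl⟩ := hdvd
  refine ⟨h.coeff 0, ?_⟩
  have hd' : homogeneousComponent D (Q * h) = Q * h := by
    rw [homogeneousComponent_of_mem ((mem_homogeneousSubmodule _ _).mpr hd), if_pos rfl]
  conv_lhs => rw [← hd']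
  conv_lhs => rw [show Q * h
      = ∑ i ∈ Finset.range (h.totalDegree + 1), Q * homogeneousComponent i h by
    rw [← Finset.mul_sum, sum_homogeneousComponent]]
  rw [map_sum]
  have hterm : ∀ i ∈ Finset.range (h.totalDegree + 1),
      homogeneousComponent D (Q * homogeneousComponent i h)
        = if i = 0 then Q * homogeneousComponent 0 h else 0 := by
    intro i _
    have hmem : Q * homogeneousComponent i h ∈ homogeneousSubmodule _ K (D + i) :=
      (mem_homogeneousSubmodule _ _).mpr (hQ.mul (homogeneousComponent_isHomogeneous i h))
    rw [homogeneousComponent_of_mem hmem]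
    by_cases hi : i = 0
    · subst hi; rw [if_pos (by omega), if_pos rfl]
    · rw [if_neg (by omega), if_neg hi]
  rw [Finset.sum_congr rfl hterm, Finset.sum_ite_eq' (Finset.range (h.totalDegree + 1))
    0 (fun _ => Q * homogeneousComponent 0 h), if_pos (Finset.mem_range.mpr (by omega))]
  rw [homogeneousComponent_zero, mul_comm]

lemma master (m q : ℕ) (θ : Fin n → Fin (n+1) → MvPolynomial (Fin (n+1)) K)
    (δ : Fin n → ℕ)
    (hθ0 : ∀ k, θ k 0 = 0)
    (hθD : ∀ k, mixedD K (n+1) m q (θ k))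
    (hhom : ∀ k j, (θ k j).IsHomogeneous (δ k))
    (hδ : ∑ k, δ k = ∑ p ∈ Pairs n, nu m q p)
    (hindep : ∀ v : Fin n → MvPolynomial (Fin (n+1)) K,
      (∀ j : Fin n, (∑ k, θ k (Fin.succ j) * v k) = 0) → v = 0) :
    isBasisOf (mixedD K (n+1) m q) (Fin.cases (fun _ => 1) θ) := by
  classical
  set M : Matrix (Fin n) (Fin n) (MvPolynomial (Fin (n+1)) K) :=
    Matrix.of (fun j k => θ k (Fin.succ j)) with hM
  have hMapp : ∀ j k, M j k = θ k (Fin.succ j) := fun j k => rfl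
  have hsuccpos : ∀ j : Fin n, 0 < ((Fin.succ j : Fin (n+1)) : ℕ) := by
    intro j; simp [Fin.val_succ]
  -- divisibility of the determinant
  have hQdet : Qpoly K n m q ∣ M.det := by
    apply Q_dvd_det
    · intro j k
      have h := (hθD k).1 (Fin.succ j) (hsuccpos j)
      rw [hθ0, zero_sub] at h
      exact (dvd_neg).mp h
    · intro i j hij k
      exact (hθD k).2 (Fin.succ i) (Fin.succ j) (hsuccpos i) (Fin.succ_lt_succ_iff.mpr hij)
  have hdethom : M.det.IsHomogeneous (∑ p ∈ Pairs n, nu m q p) := by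
    rw [← hδ]
    exact det_isHomogeneous M δ (fun j k => hhom k (Fin.succ j))
  obtain ⟨c, hc⟩ := det_eq_C_mul_Q hdethom (Qpoly_isHomogeneous m q) hQdet
  have hcne : c ≠ 0 := by
    intro hc0
    subst hc0
    rw [map_zero, zero_mul] at hc
    obtain ⟨v, hv, hmul⟩ := Matrix.exists_mulVec_eq_zero_iff.mpr hc
    apply hv
    apply hindep
    intro j
    have := congrFun hmul j
    simpa [Matrix.mulVec, dotProduct, hMapp] using this
  have hCc : (C c : MvPolynomial (Fin (n+1)) K) ≠ 0 := by
    simpa using hcne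
  have hdetne : M.det ≠ 0 := by
    rw [hc]
    exact mul_ne_zero hCc (Qpoly_ne_zero m q)
  constructor
  · -- each θfull j is in D
    intro j
    induction j using Fin.cases with
    | zero =>
      constructor
      · intro j _; simp
      · intro i j _ _; simp
    | succ k =>
      simpa using hθD k
  · intro g hg
    set b : Fin n → MvPolynomial (Fin (n+1)) K := fun j => g (Fin.succ j) - g 0 with hb
    have hb0 : ∀ j, b j = g (Fin.succ j) - g 0 := fun j => rfl
    have hcrdvd : ∀ k, Qpoly K n m q ∣ Matrix.cramer M b k := by
      intro k
      rw [Matrix.cramer_apply]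
      apply Q_dvd_det
      · intro j k'
        rw [Matrix.updateCol_apply]
        by_cases hk' : k' = k
        · rw [if_pos hk']
          have h := hg.1 (Fin.succ j) (hsuccpos j)
          rw [hb0 j, show g (Fin.succ j) - g 0 = -(g 0 - g (Fin.succ j)) by ring]
          exact (dvd_neg).mpr h
        · rw [if_neg hk']
          have h := (hθD k').1 (Fin.succ j) (hsuccpos j)
          rw [hθ0, zero_sub] at h
          exact (dvd_neg).mp h
      · intro i j hij k'
        rw [Matrix.updateCol_apply, Matrix.updateCol_apply]
        by_cases hk' : k' = k
        · rw [if_pos hk', if_pos hk']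
          have : b i - b j = g (Fin.succ i) - g (Fin.succ j) := by rw [hb0 i, hb0 j]; ring
          rw [this]
          exact hg.2 (Fin.succ i) (Fin.succ j) (hsuccpos i) (Fin.succ_lt_succ_iff.mpr hij)
        · rw [if_neg hk', if_neg hk']
          exact (hθD k').2 (Fin.succ i) (Fin.succ j) (hsuccpos i)
            (Fin.succ_lt_succ_iff.mpr hij)
    choose s hs using hcrdvd
    set c' : Fin n → MvPolynomial (Fin (n+1)) K := fun k => C c⁻¹ * s k with hc'
    have hcram : Matrix.cramer M b = (C c * Qpoly K n m q) • c' := by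
      funext k
      rw [Pi.smul_apply, hc', smul_eq_mul, hs k]
      rw [show C c * Qpoly K n m q * (C c⁻¹ * s k)
          = (C c * C c⁻¹) * (Qpoly K n m q * s k) by ring]
      rw [← map_mul, mul_inv_cancel₀ hcne, map_one, one_mul]
    have hMc' : M.mulVec c' = b := by
      have h1 := Matrix.mulVec_cramer M b
      rw [hcram, Matrix.mulVec_smul, hc] at h1
      funext j
      have h2 := congrFun h1 j
      rw [Pi.smul_apply, Pi.smul_apply, smul_eq_mul, smul_eq_mul] at h2
      exact mul_left_cancel₀ (mul_ne_zero hCc (Qpoly_ne_zero m q)) h2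
    set cc : Fin (n+1) → MvPolynomial (Fin (n+1)) K := Fin.cases (g 0) c' with hcc
    have hmulVecApp : ∀ (u : Fin n → MvPolynomial (Fin (n+1)) K) (j : Fin n),
        M.mulVec u j = ∑ k, θ k (Fin.succ j) * u k := by
      intro u j
      simp [Matrix.mulVec, dotProduct, hMapp]
    have hcc0 : cc 0 = g 0 := by rw [hcc]; simp
    have hccs : ∀ k, cc (Fin.succ k) = c' k := by intro k; rw [hcc]; simp
    refine ⟨cc, ?_, ?_⟩
    · -- existence
      funext i
      rw [Finset.sum_apply, Fin.sum_univ_succ]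
      simp only [Pi.smul_apply, smul_eq_mul, hcc0, hccs, Fin.cases_zero, Fin.cases_succ]
      induction i using Fin.cases with
      | zero => simp [hθ0]
      | succ j =>
        have h2 := congrFun hMc' j
        rw [hmulVecApp] at h2
        have h3 : ∑ k, c' k * θ k (Fin.succ j) = b j := by
          rw [← h2]
          exact Finset.sum_congr rfl (fun k _ => mul_comm _ _)
        rw [h3, hb0 j]
        ring
    · -- uniqueness
      intro y hy
      have hyi : ∀ i, g i = y 0 * (Fin.cases (fun _ => (1:MvPolynomial (Fin (n+1)) K)) θ
            : Fin (n+1) → Fin (n+1) → MvPolynomial (Fin (n+1)) K) 0 i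
          + ∑ k, y (Fin.succ k) * (Fin.cases (fun _ => (1:MvPolynomial (Fin (n+1)) K)) θ
            : Fin (n+1) → Fin (n+1) → MvPolynomial (Fin (n+1)) K) (Fin.succ k) i := by
        intro i
        have h7 := congrFun hy i
        rw [Finset.sum_apply, Fin.sum_univ_succ] at h7
        simpa [Pi.smul_apply, smul_eq_mul] using h7
      have hyi' : ∀ i, g i = y 0 + ∑ k, y (Fin.succ k) * θ k i := by
        intro i
        have := hyi i
        simpa [Fin.cases_zero, Fin.cases_succ] using this
      have hy0 : g 0 = y 0 := by
        have h8 := hyi' 0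
        simp only [hθ0, mul_zero, Finset.sum_const_zero, add_zero] at h8
        exact h8
      set u : Fin n → MvPolynomial (Fin (n+1)) K := fun k => y (Fin.succ k) with hufun
      have hu : ∀ k, u k = y (Fin.succ k) := fun k => rfl
      have hyu : M.mulVec u = b := by
        funext j
        rw [hmulVecApp u j]
        have h6 := hyi' (Fin.succ j)
        have h10 : ∑ k, θ k (Fin.succ j) * u k
            = ∑ k, y (Fin.succ k) * θ k (Fin.succ j) := by
          refine Finset.sum_congr rfl (fun k _ => ?_)
          rw [hu k, mul_comm]
        have h11 : (∑ k, y (Fin.succ k) * θ k (Fin.succ j)) = g (Fin.succ j) - y 0 := by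
          rw [h6]; ring
        rw [h10, h11, ← hy0, hb0 j]
      have huc : u = c' := by
        have hw : M.mulVec (u - c') = 0 := by
          rw [Matrix.mulVec_sub, hyu, hMc', sub_self]
        have h3 : M.det • (u - c') = 0 := by
          calc M.det • (u - c')
              = (M.det • (1 : Matrix (Fin n) (Fin n) _)).mulVec (u - c') := by
                rw [Matrix.smul_mulVec, Matrix.one_mulVec]
            _ = (M.adjugate * M).mulVec (u - c') := by rw [Matrix.adjugate_mul]
            _ = M.adjugate.mulVec (M.mulVec (u - c')) := by rw [← Matrix.mulVec_mulVec]
            _ = 0 := by rw [hw, Matrix.mulVec_zero]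
        funext k
        have h4 := congrFun h3 k
        rw [Pi.smul_apply, Pi.sub_apply, smul_eq_mul] at h4
        rcases mul_eq_zero.mp h4 with h5 | h5
        · exact absurd h5 hdetne
        · exact sub_eq_zero.mp h5
      funext i
      induction i using Fin.cases with
      | zero => rw [hcc0]; exact hy0.symm
      | succ k => rw [hccs k]; exact (hu k).symm.trans (congrFun huc k)

lemma mul_dvd_prod {ι : Type} [Fintype ι] [DecidableEq ι] {α : Type} [CommRing α]
    {f : ι → α} {s t : ι} (hst : s ≠ t) : f s * f t ∣ ∏ i, f i := by
  rw [← Finset.mul_prod_erase Finset.univ f (Finset.mem_univ s)]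
  exact mul_dvd_mul_left (f s)
    (Finset.dvd_prod_of_mem f (Finset.mem_erase.mpr ⟨hst.symm, Finset.mem_univ t⟩))

/-- the coefficient vector of the derivation attached to an integrand family `G` -/
noncomputable def thetaOf (G : Fin n → Polynomial (MvPolynomial (Fin (n+1)) K))
    (k : Fin n) (j : Fin (n+1)) : MvPolynomial (Fin (n+1)) K :=
  (integ (G k)).eval (X j) - (integ (G k)).eval (X 0)

lemma thetaOf_zero (G : Fin n → Polynomial (MvPolynomial (Fin (n+1)) K)) (k : Fin n) :
    thetaOf G k 0 = 0 := sub_self _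

lemma thetaOf_sub (G : Fin n → Polynomial (MvPolynomial (Fin (n+1)) K)) (k : Fin n)
    (a b : Fin (n+1)) : thetaOf G k b - thetaOf G k a
      = (integ (G k)).eval (X b) - (integ (G k)).eval (X a) := by
  rw [thetaOf, thetaOf]
  ring

lemma thetaOf_dvd (G : Fin n → Polynomial (MvPolynomial (Fin (n+1)) K)) (k : Fin n)
    (i j : Fin (n+1)) (p r : ℕ)
    (h : (PX - PC (X j))^p * (PX - PC (X i))^r ∣ G k) :
    (X i - X j : MvPolynomial (Fin (n+1)) K)^(p+r+1) ∣ thetaOf G k i - thetaOf G k j := by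
  rw [thetaOf_sub]
  exact key_dvd (X j) (X i) (G k) p r h

lemma thetaOf_isHomogeneous (G : Fin n → Polynomial (MvPolynomial (Fin (n+1)) K))
    (k : Fin n) (d : ℕ) (h : HG (G k) d) (j : Fin (n+1)) :
    (thetaOf G k j).IsHomogeneous (d+1) := by
  rw [thetaOf]
  exact ((h.integ).eval_X j).sub ((h.integ).eval_X 0)

lemma indep_generic (G : Fin n → Polynomial (MvPolynomial (Fin (n+1)) K))
    (ε : Fin (n+1) → ℕ)
    (hdvd : ∀ k (j : Fin (n+1)), (PX - PC (X j))^(ε j) ∣ G k)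
    (hdeg : ∀ k, (G k).natDegree + 1 < ∑ j, (ε j + 1))
    (v : Fin n → MvPolynomial (Fin (n+1)) K)
    (hv : ∀ j : Fin n, ∑ k, thetaOf G k (Fin.succ j) * v k = 0) :
    ∑ k, Polynomial.C (v k) * G k = 0 := by
  classical
  set P : Polynomial (MvPolynomial (Fin (n+1)) K) := ∑ k, Polynomial.C (v k) * integ (G k)
    with hP
  set w : MvPolynomial (Fin (n+1)) K := P.eval (X 0) with hw
  set Pt := P - Polynomial.C w with hPt
  have hder : Pt.derivative = ∑ k, Polynomial.C (v k) * G k := by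
    rw [hPt, Polynomial.derivative_sub, Polynomial.derivative_C, sub_zero, hP,
      map_sum]
    refine Finset.sum_congr rfl (fun k _ => ?_)
    rw [Polynomial.derivative_C_mul, derivative_integ]
  have hroot : ∀ j : Fin (n+1), Pt.eval (X j) = 0 := by
    intro j
    induction j using Fin.cases with
    | zero => rw [hPt, Polynomial.eval_sub, Polynomial.eval_C, hw, sub_self]
    | succ j' =>
      rw [hPt, Polynomial.eval_sub, Polynomial.eval_C, hw, sub_eq_zero]
      rw [hP, Polynomial.eval_finset_sum, Polynomial.eval_finset_sum]
      rw [← sub_eq_zero, ← Finset.sum_sub_distrib]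
      rw [← hv j']
      refine Finset.sum_congr rfl (fun k _ => ?_)
      rw [Polynomial.eval_mul, Polynomial.eval_mul, Polynomial.eval_C, Polynomial.eval_C]
      rw [thetaOf]
      ring
  have hdvdPt : ∀ j : Fin (n+1), (PX - PC (X j))^(ε j + 1) ∣ Pt := by
    intro j
    apply pow_sub_dvd_of_dvd_derivative _ _ _ _ (hroot j)
    rw [hder]
    apply Finset.dvd_sum
    intro k _
    exact Dvd.dvd.mul_left (hdvd k j) _
  have hprodvd : (∏ j : Fin (n+1), (PX - PC (X j))^(ε j + 1)) ∣ Pt := by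
    apply prod_pow_dvd
    · intro j _
      exact Polynomial.prime_X_sub_C (X j)
    · intro i _ j _ hij
      exact not_X_sub_C_dvd (fun h => hij (X_injective h))
    · intro j _
      exact hdvdPt j
  have hPt0 : Pt = 0 := by
    by_contra h0
    have hdegle := Polynomial.natDegree_le_of_dvd hprodvd h0
    have hproddeg : (∏ j : Fin (n+1),
        ((PX - PC (X j) : Polynomial (MvPolynomial (Fin (n+1)) K)))^(ε j + 1)).natDegree
        = ∑ j, (ε j + 1) := by
      rw [Polynomial.natDegree_prod _ _ (fun j _ =>
        pow_ne_zero _ (Polynomial.X_sub_C_ne_zero (X j)))]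
      refine Finset.sum_congr rfl (fun j _ => ?_)
      rw [Polynomial.natDegree_pow, Polynomial.natDegree_X_sub_C, mul_one]
    rw [hproddeg] at hdegle
    have hPtle : Pt.natDegree < ∑ j, (ε j + 1) := by
      have h1 : P.natDegree < ∑ j, (ε j + 1) := by
        have h2 : ∀ k ∈ Finset.univ, (Polynomial.C (v k) * integ (G k)).natDegree
            ≤ (∑ j, (ε j + 1)) - 1 := by
          intro k _
          calc (Polynomial.C (v k) * integ (G k)).natDegree
              ≤ (integ (G k)).natDegree := Polynomial.natDegree_C_mul_le _ _
            _ ≤ (G k).natDegree + 1 := natDegree_integ_le _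
            _ ≤ (∑ j, (ε j + 1)) - 1 := by have := hdeg k; omega
        have h3 := Polynomial.natDegree_sum_le_of_forall_le Finset.univ _ h2
        have h4 : 0 < ∑ j, (ε j + 1) := by positivity
        rw [← hP] at h3
        omega
      calc Pt.natDegree ≤ max P.natDegree (Polynomial.C w).natDegree :=
            Polynomial.natDegree_sub_le _ _
        _ < ∑ j, (ε j + 1) := by
            rw [Polynomial.natDegree_C]
            omega
    omega
  rw [← hder, hPt0, Polynomial.derivative_zero]

noncomputable def Godd (e q : ℕ) (k : Fin n) : Polynomial (MvPolynomial (Fin (n+1)) K) :=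
  PX ^ (k:ℕ) * ((PX - PC (X 0))^(e+q) * ∏ s : Fin n, (PX - PC (X (Fin.succ s)))^e)

lemma Godd_dvd_zero (e q : ℕ) (k : Fin n) (j' : Fin n) :
    (PX - PC (X (Fin.succ j')))^e * (PX - PC (X (0 : Fin (n+1))))^(e+q) ∣ Godd (K := K) e q k := by
  have h1 : ((PX - PC (X (Fin.succ j')) : Polynomial (MvPolynomial (Fin (n+1)) K)))^e
      ∣ ∏ s : Fin n, (PX - PC (X (Fin.succ s)))^e :=
    Finset.dvd_prod_of_mem _ (Finset.mem_univ j')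
  obtain ⟨u, hu⟩ := h1
  exact ⟨PX ^ (k:ℕ) * u, by rw [Godd, hu]; ring⟩

lemma Godd_dvd_pair (e q : ℕ) (k : Fin n) {i' j' : Fin n} (h : i' ≠ j') :
    (PX - PC (X (Fin.succ j')))^e * (PX - PC (X (Fin.succ i')))^e ∣ Godd (K := K) e q k := by
  have h1 := mul_dvd_prod (f := fun s : Fin n =>
    ((PX - PC (X (Fin.succ s)) : Polynomial (MvPolynomial (Fin (n+1)) K)))^e)
    (s := j') (t := i') h.symm
  obtain ⟨u, hu⟩ := h1
  exact ⟨PX ^ (k:ℕ) * (PX - PC (X 0))^(e+q) * u, by rw [Godd, hu]; ring⟩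

lemma Godd_mixedD (e q : ℕ) (k : Fin n) :
    mixedD K (n+1) (2*e+1) q (thetaOf (Godd (K := K) e q) k) := by
  constructor
  · intro j hj
    obtain ⟨j', rfl⟩ := Fin.exists_succ_eq_of_ne_zero (Fin.pos_iff_ne_zero.mp hj)
    have h := thetaOf_dvd (Godd (K := K) e q) k 0 (Fin.succ j') e (e+q) (Godd_dvd_zero e q k j')
    have heq : e + (e+q) + 1 = 2*e+1 + q := by omega
    rwa [heq] at h
  · intro i j hi hij
    obtain ⟨i', rfl⟩ := Fin.exists_succ_eq_of_ne_zero (Fin.pos_iff_ne_zero.mp hi)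
    have hj : (0:ℕ) < (j:ℕ) := by
      have := Fin.lt_def.mp hij
      omega
    obtain ⟨j', rfl⟩ := Fin.exists_succ_eq_of_ne_zero (Fin.pos_iff_ne_zero.mp hj)
    have hij' : i' ≠ j' := by
      intro hh
      subst hh
      exact absurd hij (lt_irrefl _)
    have h := thetaOf_dvd (Godd (K := K) e q) k (Fin.succ i') (Fin.succ j') e e
      (Godd_dvd_pair e q k hij')
    have heq : e + e + 1 = 2*e+1 := by omega
    rwa [heq] at h

lemma Godd_HG (e q : ℕ) (k : Fin n) :
    HG (Godd (K := K) e q k) ((k:ℕ) + (e+q) + n*e) := by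
  have h1 : HG (Godd (K := K) e q k)
      (1*(k:ℕ) + (1*(e+q) + ∑ _s : Fin n, 1*e)) := by
    refine HG.mul (HG.Xp.pow _) (HG.mul ((HG.X_sub_C (isHomogeneous_X K 0)).pow _) ?_)
    exact HG.prod Finset.univ _ (fun _ => 1*e)
      (fun s _ => (HG.X_sub_C (isHomogeneous_X K (Fin.succ s))).pow e)
  have heq : 1*(k:ℕ) + (1*(e+q) + ∑ _s : Fin n, 1*e) = (k:ℕ) + (e+q) + n*e := by
    rw [Finset.sum_const, Finset.card_univ, Fintype.card_fin, smul_eq_mul]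
    ring
  rwa [heq] at h1

lemma Godd_natDegree_le (e q : ℕ) (k : Fin n) :
    (Godd (K := K) e q k).natDegree ≤ (k:ℕ) + (e+q) + n*e := by
  have h2 : ((PX - PC (X (0:Fin (n+1))) : Polynomial (MvPolynomial (Fin (n+1)) K))^(e+q)).natDegree
      ≤ e+q := by
    rw [Polynomial.natDegree_pow, Polynomial.natDegree_X_sub_C, mul_one]
  have h3 : ((∏ s : Fin n,
      ((PX - PC (X (Fin.succ s)) : Polynomial (MvPolynomial (Fin (n+1)) K)))^e)).natDegree
      ≤ n*e := by
    refine le_trans (Polynomial.natDegree_prod_le _ _) ?_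
    have : ∀ s : Fin n, ((PX - PC (X (Fin.succ s)) :
        Polynomial (MvPolynomial (Fin (n+1)) K))^e).natDegree ≤ e := by
      intro s
      rw [Polynomial.natDegree_pow, Polynomial.natDegree_X_sub_C, mul_one]
    calc ∑ s : Fin n, ((PX - PC (X (Fin.succ s)) :
          Polynomial (MvPolynomial (Fin (n+1)) K))^e).natDegree
        ≤ ∑ _s : Fin n, e := Finset.sum_le_sum (fun s _ => this s)
      _ = n*e := by rw [Finset.sum_const, Finset.card_univ, Fintype.card_fin, smul_eq_mul]
  calc (Godd (K := K) e q k).natDegree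
      ≤ (PX ^ (k:ℕ) : Polynomial (MvPolynomial (Fin (n+1)) K)).natDegree
        + (((PX - PC (X 0))^(e+q) * ∏ s : Fin n, (PX - PC (X (Fin.succ s)))^e :
            Polynomial (MvPolynomial (Fin (n+1)) K))).natDegree :=
        Polynomial.natDegree_mul_le
    _ ≤ (k:ℕ) + ((e+q) + n*e) := by
        rw [Polynomial.natDegree_X_pow]
        have := le_trans (Polynomial.natDegree_mul_le
          (p := ((PX - PC (X (0:Fin (n+1))) : Polynomial (MvPolynomial (Fin (n+1)) K))^(e+q)))
          (q := ∏ s : Fin n, (PX - PC (X (Fin.succ s)))^e)) (add_le_add h2 h3)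
        omega
    _ = (k:ℕ) + (e+q) + n*e := by ring

lemma sum_eps (e' q' : ℕ) :
    ∑ j : Fin (n+1), ((if j = 0 then e'+q' else e') + 1) = (e'+q'+1) + n*(e'+1) := by
  rw [Fin.sum_univ_succ]
  rw [if_pos rfl]
  congr 1
  have : ∀ s : Fin n, ((if Fin.succ s = 0 then e'+q' else e') + 1) = e' + 1 := by
    intro s
    rw [if_neg (Fin.succ_ne_zero s)]
  rw [Finset.sum_congr rfl (fun s _ => this s), Finset.sum_const, Finset.card_univ,
    Fintype.card_fin, smul_eq_mul]

lemma coeff_sum_C_mul_X_pow (v : Fin n → MvPolynomial (Fin (n+1)) K) (k0 : Fin n) :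
    (∑ k, Polynomial.C (v k) * PX ^ (k:ℕ)).coeff (k0:ℕ) = v k0 := by
  rw [Polynomial.finset_sum_coeff]
  rw [Finset.sum_eq_single k0]
  · simp [Polynomial.coeff_C_mul, Polynomial.coeff_X_pow]
  · intro b _ hb
    have hne : ¬((k0:ℕ) = (b:ℕ)) := fun h => hb (Fin.ext h).symm
    simp [Polynomial.coeff_C_mul, Polynomial.coeff_X_pow, hne]
  · intro h
    exact absurd (Finset.mem_univ k0) h

lemma indep_odd (e q : ℕ) (v : Fin n → MvPolynomial (Fin (n+1)) K)
    (hv : ∀ j : Fin n, ∑ k, thetaOf (Godd (K := K) e q) k (Fin.succ j) * v k = 0) : v = 0 := by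
  have hsum := indep_generic (Godd e q) (fun j => if j = 0 then e+q else e) ?_ ?_ v hv
  · have hfac : ∑ k, Polynomial.C (v k) * Godd (K := K) e q k
        = (∑ k, Polynomial.C (v k) * PX ^ (k:ℕ))
          * ((PX - PC (X 0))^(e+q) * ∏ s : Fin n, (PX - PC (X (Fin.succ s)))^e) := by
      rw [Finset.sum_mul]
      refine Finset.sum_congr rfl (fun k _ => ?_)
      rw [Godd]
      ring
    rw [hfac] at hsum
    have hC : ((PX - PC (X 0))^(e+q) * ∏ s : Fin n,
        ((PX - PC (X (Fin.succ s)) : Polynomial (MvPolynomial (Fin (n+1)) K)))^e) ≠ 0 := by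
      refine mul_ne_zero (pow_ne_zero _ (Polynomial.X_sub_C_ne_zero _)) ?_
      rw [Finset.prod_ne_zero_iff]
      exact fun s _ => pow_ne_zero _ (Polynomial.X_sub_C_ne_zero _)
    have h0 := (mul_eq_zero.mp hsum).resolve_right hC
    funext k
    rw [Pi.zero_apply, ← coeff_sum_C_mul_X_pow v k, h0, Polynomial.coeff_zero]
  · intro k j
    induction j using Fin.cases with
    | zero =>
      rw [show (if (0 : Fin (n+1)) = 0 then e+q else e) = e + q from by simp]
      exact ⟨PX ^ (k:ℕ) * ∏ s : Fin n, (PX - PC (X (Fin.succ s)))^e, by rw [Godd]; ring⟩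
    | succ s =>
      rw [show (if (Fin.succ s : Fin (n+1)) = 0 then e+q else e) = e from by
        simp [Fin.succ_ne_zero]]
      obtain ⟨u, hu⟩ : ((PX - PC (X (Fin.succ s)) :
          Polynomial (MvPolynomial (Fin (n+1)) K)))^e
          ∣ ∏ s' : Fin n, (PX - PC (X (Fin.succ s')))^e :=
        Finset.dvd_prod_of_mem _ (Finset.mem_univ s)
      exact ⟨PX ^ (k:ℕ) * (PX - PC (X 0))^(e+q) * u, by rw [Godd, hu]; ring⟩
  · intro k
    rw [sum_eps]
    have h1 := Godd_natDegree_le (K := K) (n := n) e q k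
    have h2 : (k:ℕ) < n := k.isLt
    have h3 : n*(e+1) = n*e + n := by ring
    omega

lemma mul_dvd_prod' {ι : Type} [DecidableEq ι] {α : Type} [CommRing α]
    {f : ι → α} {s : Finset ι} {a b : ι} (ha : a ∈ s) (hb : b ∈ s) (hab : a ≠ b) :
    f a * f b ∣ ∏ i ∈ s, f i := by
  rw [← Finset.mul_prod_erase s f ha]
  exact mul_dvd_mul_left (f a)
    (Finset.dvd_prod_of_mem f (Finset.mem_erase.mpr ⟨hab.symm, hb⟩))

/-- integrand for the even case `m = 2*(e'+1)` -/
noncomputable def Geven (e' q : ℕ) (k : Fin n) : Polynomial (MvPolynomial (Fin (n+1)) K) :=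
  ((PX - PC (X 0))^(e'+1+q) * ∏ s : Fin n, (PX - PC (X (Fin.succ s)))^e')
    * ∏ s ∈ Finset.univ.erase k, (PX - PC (X (Fin.succ s)))

lemma Geven_mixedD (e' q : ℕ) (k : Fin n) :
    mixedD K (n+1) (2*(e'+1)) q (thetaOf (Geven (K := K) e' q) k) := by
  constructor
  · intro j hj
    obtain ⟨j', rfl⟩ := Fin.exists_succ_eq_of_ne_zero (Fin.pos_iff_ne_zero.mp hj)
    have hdvd : (PX - PC (X (Fin.succ j')))^e' * (PX - PC (X (0:Fin (n+1))))^(e'+1+q)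
        ∣ Geven (K := K) e' q k := by
      obtain ⟨u, hu⟩ : ((PX - PC (X (Fin.succ j')) :
          Polynomial (MvPolynomial (Fin (n+1)) K)))^e'
          ∣ ∏ s : Fin n, (PX - PC (X (Fin.succ s)))^e' :=
        Finset.dvd_prod_of_mem _ (Finset.mem_univ j')
      exact ⟨u * ∏ s ∈ Finset.univ.erase k, (PX - PC (X (Fin.succ s))),
        by rw [Geven, hu]; ring⟩
    have h := thetaOf_dvd (Geven (K := K) e' q) k 0 (Fin.succ j') e' (e'+1+q) hdvd
    have heq : e' + (e'+1+q) + 1 = 2*(e'+1) + q := by omega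
    rwa [heq] at h
  · intro i j hi hij
    obtain ⟨i', rfl⟩ := Fin.exists_succ_eq_of_ne_zero (Fin.pos_iff_ne_zero.mp hi)
    have hj : (0:ℕ) < (j:ℕ) := by
      have := Fin.lt_def.mp hij
      omega
    obtain ⟨j', rfl⟩ := Fin.exists_succ_eq_of_ne_zero (Fin.pos_iff_ne_zero.mp hj)
    have hij' : i' ≠ j' := by
      intro hh
      subst hh
      exact absurd hij (lt_irrefl _)
    have hBB := mul_dvd_prod' (f := fun s : Fin n =>
        ((PX - PC (X (Fin.succ s)) : Polynomial (MvPolynomial (Fin (n+1)) K)))^e')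
      (Finset.mem_univ j') (Finset.mem_univ i') hij'.symm
    obtain ⟨u, hu⟩ := hBB
    by_cases hjk : j' = k
    · -- j' = k, so i' ≠ k; single factor for i
      have hik : i' ≠ k := fun h => hij' (h.trans hjk.symm)
      obtain ⟨w, hw⟩ : ((PX - PC (X (Fin.succ i')) :
          Polynomial (MvPolynomial (Fin (n+1)) K)))
          ∣ ∏ s ∈ Finset.univ.erase k, (PX - PC (X (Fin.succ s))) :=
        Finset.dvd_prod_of_mem _ (Finset.mem_erase.mpr ⟨hik, Finset.mem_univ i'⟩)
      have hdvd : (PX - PC (X (Fin.succ j')))^e' * (PX - PC (X (Fin.succ i')))^(e'+1)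
          ∣ Geven (K := K) e' q k :=
        ⟨(PX - PC (X 0))^(e'+1+q) * u * w, by rw [Geven, hu, hw]; ring⟩
      have h := thetaOf_dvd (Geven (K := K) e' q) k (Fin.succ i') (Fin.succ j')
        e' (e'+1) hdvd
      have heq : e' + (e'+1) + 1 = 2*(e'+1) := by omega
      rwa [heq] at h
    · -- j' ≠ k; single factor for j
      obtain ⟨w, hw⟩ : ((PX - PC (X (Fin.succ j')) :
          Polynomial (MvPolynomial (Fin (n+1)) K)))
          ∣ ∏ s ∈ Finset.univ.erase k, (PX - PC (X (Fin.succ s))) :=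
        Finset.dvd_prod_of_mem _ (Finset.mem_erase.mpr ⟨hjk, Finset.mem_univ j'⟩)
      have hdvd : (PX - PC (X (Fin.succ j')))^(e'+1) * (PX - PC (X (Fin.succ i')))^e'
          ∣ Geven (K := K) e' q k :=
        ⟨(PX - PC (X 0))^(e'+1+q) * u * w, by rw [Geven, hu, hw]; ring⟩
      have h := thetaOf_dvd (Geven (K := K) e' q) k (Fin.succ i') (Fin.succ j')
        (e'+1) e' hdvd
      have heq : (e'+1) + e' + 1 = 2*(e'+1) := by omega
      rwa [heq] at h

lemma Geven_HG (e' q : ℕ) (k : Fin n) :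
    HG (Geven (K := K) e' q k) ((e'+1+q) + n*e' + (n-1)) := by
  have h1 : HG (Geven (K := K) e' q k)
      ((1*(e'+1+q) + ∑ _s : Fin n, 1*e') + ∑ _s ∈ Finset.univ.erase k, 1) := by
    refine HG.mul (HG.mul ((HG.X_sub_C (isHomogeneous_X K 0)).pow _) ?_) ?_
    · exact HG.prod Finset.univ _ (fun _ => 1*e')
        (fun s _ => (HG.X_sub_C (isHomogeneous_X K (Fin.succ s))).pow e')
    · exact HG.prod (Finset.univ.erase k) _ (fun _ => 1)
        (fun s _ => HG.X_sub_C (isHomogeneous_X K (Fin.succ s)))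
  have heq : (1*(e'+1+q) + ∑ _s : Fin n, 1*e') + ∑ _s ∈ Finset.univ.erase k, (1:ℕ)
      = (e'+1+q) + n*e' + (n-1) := by
    rw [Finset.sum_const, Finset.card_univ, Fintype.card_fin, smul_eq_mul,
      Finset.sum_const, Finset.card_erase_of_mem (Finset.mem_univ k),
      Finset.card_univ, Fintype.card_fin, smul_eq_mul]
    ring
  rwa [heq] at h1

lemma Geven_natDegree_le (e' q : ℕ) (k : Fin n) :
    (Geven (K := K) e' q k).natDegree ≤ (e'+1+q) + n*e' + (n-1) := by
  have h2 : ((PX - PC (X (0:Fin (n+1))) :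
      Polynomial (MvPolynomial (Fin (n+1)) K))^(e'+1+q)).natDegree ≤ e'+1+q := by
    rw [Polynomial.natDegree_pow, Polynomial.natDegree_X_sub_C, mul_one]
  have h3 : ((∏ s : Fin n, ((PX - PC (X (Fin.succ s)) :
      Polynomial (MvPolynomial (Fin (n+1)) K)))^e')).natDegree ≤ n*e' := by
    refine le_trans (Polynomial.natDegree_prod_le _ _) ?_
    calc ∑ s : Fin n, ((PX - PC (X (Fin.succ s)) :
          Polynomial (MvPolynomial (Fin (n+1)) K))^e').natDegree
        ≤ ∑ _s : Fin n, e' := Finset.sum_le_sum (fun s _ => by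
          rw [Polynomial.natDegree_pow, Polynomial.natDegree_X_sub_C, mul_one])
      _ = n*e' := by rw [Finset.sum_const, Finset.card_univ, Fintype.card_fin, smul_eq_mul]
  have h4 : ((∏ s ∈ Finset.univ.erase k, ((PX - PC (X (Fin.succ s)) :
      Polynomial (MvPolynomial (Fin (n+1)) K))))).natDegree ≤ n-1 := by
    refine le_trans (Polynomial.natDegree_prod_le _ _) ?_
    calc ∑ s ∈ Finset.univ.erase k, ((PX - PC (X (Fin.succ s)) :
          Polynomial (MvPolynomial (Fin (n+1)) K))).natDegree
        ≤ ∑ _s ∈ Finset.univ.erase k, 1 := Finset.sum_le_sum (fun s _ => by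
          rw [Polynomial.natDegree_X_sub_C])
      _ = n-1 := by
          rw [Finset.sum_const, Finset.card_erase_of_mem (Finset.mem_univ k),
            Finset.card_univ, Fintype.card_fin, smul_eq_mul, mul_one]
  calc (Geven (K := K) e' q k).natDegree
      ≤ (((PX - PC (X 0))^(e'+1+q) * ∏ s : Fin n, (PX - PC (X (Fin.succ s)))^e' :
          Polynomial (MvPolynomial (Fin (n+1)) K))).natDegree
        + ((∏ s ∈ Finset.univ.erase k, ((PX - PC (X (Fin.succ s)) :
          Polynomial (MvPolynomial (Fin (n+1)) K))))).natDegree :=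
        Polynomial.natDegree_mul_le
    _ ≤ ((e'+1+q) + n*e') + (n-1) := by
        have h5 := le_trans (Polynomial.natDegree_mul_le
          (p := ((PX - PC (X (0:Fin (n+1))) :
            Polynomial (MvPolynomial (Fin (n+1)) K))^(e'+1+q)))
          (q := ∏ s : Fin n, (PX - PC (X (Fin.succ s)))^e')) (add_le_add h2 h3)
        omega
    _ = (e'+1+q) + n*e' + (n-1) := by ring

lemma indep_even (e' q : ℕ) (v : Fin n → MvPolynomial (Fin (n+1)) K)
    (hv : ∀ j : Fin n, ∑ k, thetaOf (Geven (K := K) e' q) k (Fin.succ j) * v k = 0) :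
    v = 0 := by
  have hsum := indep_generic (Geven (K := K) e' q)
    (fun j => if j = 0 then e'+1+q else e') ?_ ?_ v hv
  · have hfac : ∑ k, Polynomial.C (v k) * Geven (K := K) e' q k
        = ((PX - PC (X 0))^(e'+1+q) * ∏ s : Fin n, (PX - PC (X (Fin.succ s)))^e')
          * ∑ k, Polynomial.C (v k)
            * ∏ s ∈ Finset.univ.erase k, (PX - PC (X (Fin.succ s))) := by
      rw [Finset.mul_sum]
      refine Finset.sum_congr rfl (fun k _ => ?_)
      rw [Geven]
      ring
    rw [hfac] at hsum
    have hCom : ((PX - PC (X 0))^(e'+1+q) * ∏ s : Fin n,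
        ((PX - PC (X (Fin.succ s)) : Polynomial (MvPolynomial (Fin (n+1)) K)))^e') ≠ 0 := by
      refine mul_ne_zero (pow_ne_zero _ (Polynomial.X_sub_C_ne_zero _)) ?_
      rw [Finset.prod_ne_zero_iff]
      exact fun s _ => pow_ne_zero _ (Polynomial.X_sub_C_ne_zero _)
    have hT := (mul_eq_zero.mp hsum).resolve_left hCom
    funext r
    have hev := congrArg (Polynomial.eval (X (Fin.succ r))) hT
    rw [Polynomial.eval_finset_sum, Polynomial.eval_zero] at hev
    rw [Finset.sum_eq_single r] at hev
    · rw [Polynomial.eval_mul, Polynomial.eval_C, Polynomial.eval_prod] at hev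
      have hprodne : (∏ s ∈ Finset.univ.erase r,
          ((PX - PC (X (Fin.succ s)) : Polynomial (MvPolynomial (Fin (n+1)) K))).eval
            (X (Fin.succ r))) ≠ 0 := by
        rw [Finset.prod_ne_zero_iff]
        intro s hs
        rw [Polynomial.eval_sub, Polynomial.eval_X, Polynomial.eval_C]
        exact X_sub_X_ne_zero (fun h => (Finset.mem_erase.mp hs).1
          (Fin.succ_injective n h).symm)
      rw [Pi.zero_apply]
      exact (mul_eq_zero.mp hev).resolve_right hprodne
    · intro b _ hbr
      rw [Polynomial.eval_mul, Polynomial.eval_prod]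
      rw [Finset.prod_eq_zero (i := r)
        (Finset.mem_erase.mpr ⟨Ne.symm hbr, Finset.mem_univ r⟩)
        (by rw [Polynomial.eval_sub, Polynomial.eval_X, Polynomial.eval_C, sub_self])]
      rw [mul_zero]
    · intro h
      exact absurd (Finset.mem_univ r) h
  · intro k j
    induction j using Fin.cases with
    | zero =>
      rw [show (if (0 : Fin (n+1)) = 0 then e'+1+q else e') = e'+1+q from by simp]
      exact ⟨(∏ s : Fin n, (PX - PC (X (Fin.succ s)))^e')
        * ∏ s ∈ Finset.univ.erase k, (PX - PC (X (Fin.succ s))),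
        by rw [Geven]; ring⟩
    | succ s =>
      rw [show (if (Fin.succ s : Fin (n+1)) = 0 then e'+1+q else e') = e' from by
        simp [Fin.succ_ne_zero]]
      obtain ⟨u, hu⟩ : ((PX - PC (X (Fin.succ s)) :
          Polynomial (MvPolynomial (Fin (n+1)) K)))^e'
          ∣ ∏ s' : Fin n, (PX - PC (X (Fin.succ s')))^e' :=
        Finset.dvd_prod_of_mem _ (Finset.mem_univ s)
      exact ⟨(PX - PC (X 0))^(e'+1+q) * u
        * ∏ s' ∈ Finset.univ.erase k, (PX - PC (X (Fin.succ s'))),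
        by rw [Geven, hu]; ring⟩
  · intro k
    have hn : 0 < n := k.pos
    have h1 := Geven_natDegree_le (K := K) (n := n) e' q k
    have hs := sum_eps (n := n) e' (q+1)
    rw [show e' + (q+1) = e'+1+q by omega] at hs
    rw [hs]
    have h3 : n*(e'+1) = n*e' + n := by ring
    omega

lemma gauss (t : ℕ) : t*t = 2*(∑ i ∈ Finset.range t, i) + t := by
  induction t with
  | zero => simp
  | succ t ih =>
    rw [Finset.sum_range_succ, show (t+1)*(t+1) = t*t + 2*t + 1 by ring, ih]
    ring

lemma sum_ite_lt (m q jn : ℕ) (hj : jn ≤ n) :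
    ∑ i ∈ Finset.range (n+1), (if i < jn then (if i = 0 then m+q else m) else 0)
      = m * jn + (if 0 < jn then q else 0) := by
  have hsub : Finset.range jn ⊆ Finset.range (n+1) := Finset.range_subset_range.mpr (by omega)
  rw [← Finset.sum_subset hsub (fun i _ hi =>
    if_neg (by rw [Finset.mem_range] at hi; omega))]
  rw [Finset.sum_congr rfl (fun i hi => if_pos (Finset.mem_range.mp hi))]
  match jn with
  | 0 => simp
  | (t+1) =>
    rw [Finset.sum_range_succ']
    rw [Finset.sum_congr rfl (fun i _ => by rw [if_neg (by omega)]), if_pos rfl,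
      Finset.sum_const, Finset.card_range, smul_eq_mul, if_pos (by omega)]
    ring

lemma sum_nu (m q : ℕ) : ∑ p ∈ Pairs n, nu m q p
    = m * (∑ j ∈ Finset.range (n+1), j) + n * q := by
  have h1 : ∑ p ∈ Pairs n, nu m q p
      = ∑ i : Fin (n+1), ∑ j : Fin (n+1),
        (if (i:ℕ) < (j:ℕ) then (if (i:ℕ) = 0 then m+q else m) else 0) := by
    rw [Pairs, Finset.sum_filter, ← Finset.univ_product_univ, Finset.sum_product]
    refine Finset.sum_congr rfl (fun i _ => Finset.sum_congr rfl (fun j _ => ?_))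
    simp only [nu, Fin.lt_def, Fin.ext_iff, Fin.val_zero]
  rw [h1, Finset.sum_comm]
  have h2 : ∀ j : Fin (n+1), (∑ i : Fin (n+1),
      (if (i:ℕ) < (j:ℕ) then (if (i:ℕ) = 0 then m+q else m) else 0))
      = m * (j:ℕ) + (if 0 < (j:ℕ) then q else 0) := by
    intro j
    rw [Fin.sum_univ_eq_sum_range (fun i =>
      (if i < (j:ℕ) then (if i = 0 then m+q else m) else 0))]
    exact sum_ite_lt m q (j:ℕ) (by omega)
  rw [Finset.sum_congr rfl (fun j _ => h2 j)]
  rw [Fin.sum_univ_eq_sum_range (fun jn => m * jn + (if 0 < jn then q else 0))]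
  rw [Finset.sum_add_distrib, ← Finset.mul_sum]
  congr 1
  rw [Finset.sum_range_succ']
  rw [Finset.sum_congr rfl (fun i _ => if_pos (by omega)), if_neg (by omega),
    Finset.sum_const, Finset.card_range, smul_eq_mul]
  ring

lemma hdelta_odd (e q : ℕ) :
    ∑ k : Fin n, ((k:ℕ) + (e+q) + n*e + 1) = ∑ p ∈ Pairs n, nu (2*e+1) q p := by
  rw [sum_nu, Fin.sum_univ_eq_sum_range (fun k => k + (e+q) + n*e + 1)]
  have hsplit : ∑ k ∈ Finset.range n, (k + (e+q) + n*e + 1)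
      = (∑ k ∈ Finset.range n, k) + n*((e+q) + n*e + 1) := by
    rw [Finset.sum_congr rfl (fun k _ => by
      rw [show k + (e+q) + n*e + 1 = k + ((e+q) + n*e + 1) by ring])]
    rw [Finset.sum_add_distrib, Finset.sum_const, Finset.card_range, smul_eq_mul]
  rw [hsplit, Finset.sum_range_succ]
  have hB := gauss n
  rw [show n*((e+q)+n*e+1) = n*e + n*q + (n*n)*e + n by ring, hB]
  ring

lemma hdelta_even (e' q : ℕ) (hn : 1 ≤ n) :
    ∑ _k : Fin n, ((e'+1+q) + n*e' + (n-1) + 1) = ∑ p ∈ Pairs n, nu (2*(e'+1)) q p := by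
  rw [sum_nu, Finset.sum_const, Finset.card_univ, Fintype.card_fin, smul_eq_mul]
  rw [show (e'+1+q) + n*e' + (n-1) + 1 = (e'+1+q) + n*e' + n by omega]
  rw [Finset.sum_range_succ]
  have hB := gauss n
  rw [show n*((e'+1+q) + n*e' + n) = n*e' + n + n*q + (n*n)*e' + n*n by ring, hB]
  ring

end Stmt14Aux

open Stmt14Aux

/-- Mixed multiplicity freeness for type `A` (Corollary): `(A; m, q)` is free with exponents
(besides the exponent `0` of the invariant direction) `{mℓ/2 + q, …, mℓ/2 + q}` for `m`
even and `{(m-1)ℓ/2 + 1 + q, …, (m-1)ℓ/2 + ℓ - 1 + q}` for `m` odd. -/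
theorem stmt14 {K : Type} [Field K] [CharZero K] (ℓ : ℕ) [NeZero ℓ] (hℓ : 2 ≤ ℓ)
    (m q : ℕ) (hm : 1 ≤ m) (hq : 1 ≤ q) :
    (Even m → ∃ θ : Fin ℓ → Fin ℓ → MvPolynomial (Fin ℓ) K,
        isBasisOf (mixedD K ℓ m q) θ ∧
        ∀ j : Fin ℓ, homogOf (θ j) (if (j : ℕ) = 0 then 0 else m * ℓ / 2 + q)) ∧
    (Odd m → ∃ θ : Fin ℓ → Fin ℓ → MvPolynomial (Fin ℓ) K,
        isBasisOf (mixedD K ℓ m q) θ ∧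
        ∀ j : Fin ℓ, homogOf (θ j)
          (if (j : ℕ) = 0 then 0 else (m - 1) * ℓ / 2 + (j : ℕ) + q)) := by
  obtain ⟨n, rfl⟩ : ∃ n, ℓ = n + 1 := ⟨ℓ - 1, by omega⟩
  have hn : 1 ≤ n := by omega
  constructor
  · -- even case
    rintro ⟨e, rfl⟩
    obtain ⟨e', rfl⟩ : ∃ e', e = e' + 1 := ⟨e - 1, by omega⟩
    set θt : Fin n → Fin (n+1) → MvPolynomial (Fin (n+1)) K :=
      thetaOf (Geven (K := K) e' q) with hθt
    refine ⟨Fin.cases (fun _ => 1) θt, ?_, ?_⟩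
    · rw [show (e'+1) + (e'+1) = 2*(e'+1) by ring]
      apply master (2*(e'+1)) q θt (fun _ => (e'+1+q) + n*e' + (n-1) + 1)
      · intro k
        exact thetaOf_zero _ k
      · intro k
        exact Geven_mixedD e' q k
      · intro k j
        exact thetaOf_isHomogeneous _ k _ (Geven_HG e' q k) j
      · exact hdelta_even e' q hn
      · intro v hv
        exact indep_even e' q v hv
    · intro j
      induction j using Fin.cases with
      | zero =>
        rw [if_pos (Fin.val_zero (n+1))]
        intro i
        right
        simp only [Fin.cases_zero]
        exact isHomogeneous_one _ _
      | succ k =>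
        rw [if_neg (by rw [Fin.val_succ]; omega)]
        intro i
        right
        simp only [Fin.cases_succ]
        have h := thetaOf_isHomogeneous _ k _ (Geven_HG (K := K) e' q k) i
        have heq : ((e'+1) + (e'+1)) * (n+1) / 2 + q = (e'+1+q) + n*e' + (n-1) + 1 := by
          rw [show ((e'+1) + (e'+1)) * (n+1) = 2 * ((e'+1)*(n+1)) by ring,
            Nat.mul_div_cancel_left _ (by norm_num : (0:ℕ) < 2),
            show (e'+1)*(n+1) = n*e' + e' + n + 1 by ring]
          omega
        rwa [heq]
  · -- odd case
    rintro ⟨e, rfl⟩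
    set θt : Fin n → Fin (n+1) → MvPolynomial (Fin (n+1)) K :=
      thetaOf (Godd (K := K) e q) with hθt
    refine ⟨Fin.cases (fun _ => 1) θt, ?_, ?_⟩
    · apply master (2*e+1) q θt (fun k => (k:ℕ) + (e+q) + n*e + 1)
      · intro k
        exact thetaOf_zero _ k
      · intro k
        exact Godd_mixedD e q k
      · intro k j
        exact thetaOf_isHomogeneous _ k _ (Godd_HG e q k) j
      · exact hdelta_odd e q
      · intro v hv
        exact indep_odd e q v hv
    · intro j
      induction j using Fin.cases with
      | zero =>
        rw [if_pos (Fin.val_zero (n+1))]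
        intro i
        right
        simp only [Fin.cases_zero]
        exact isHomogeneous_one _ _
      | succ k =>
        rw [if_neg (by rw [Fin.val_succ]; omega)]
        intro i
        right
        simp only [Fin.cases_succ]
        have h := thetaOf_isHomogeneous _ k _ (Godd_HG (K := K) e q k) i
        have heq : (2*e+1-1) * (n+1) / 2 + ((Fin.succ k : Fin (n+1)):ℕ) + q
            = (k:ℕ) + (e+q) + n*e + 1 := by
          rw [show 2*e+1-1 = 2*e by omega, show 2*e*(n+1) = 2*(e*(n+1)) by ring,
            Nat.mul_div_cancel_left _ (by norm_num : (0:ℕ) < 2), Fin.val_succ,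
            show e*(n+1) = n*e + e by ring]
          omega
        rwa [heq]
end
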